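/- arXiv:2409.06469 — 6 statements merged into one kernel-verified Lean document; each statement's English description precedes it below -/
import Mathlib

section
/- Let X be a Banach space, P ∈ B(X) a bounded projection (P² = P), and L ∈ B(X). Then the operators (P + L/n)^n converge in operator norm to e^{PLP} P as n → ∞; more precisely, (P + L/n)^n = (P + PLP/n)^n + O(1/n) in operator norm, and (P + PLP/n)^n → e^{PLP}P in norm. -/
open Filter NormedSpace Finset

section aux

lemma aux_telescope {R : Type*} [Ring R] (a b : R) :
    ∀ n : ℕ, a ^ (n + 1) - b ^ (n + 1)
      = ∑ j ∈ Finset.range (n + 1), a ^ j * (a - b) * b ^ (n - j) := by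
  intro n; induction n with
  | zero => simp
  | succ n ih =>
    rw [Finset.sum_range_succ']
    have : ∀ j ∈ Finset.range (n + 1),
        a ^ (j + 1) * (a - b) * b ^ (n + 1 - (j + 1)) = a * (a ^ j * (a - b) * b ^ (n - j)) := by
      intro j hj
      rw [Nat.succ_sub_succ, pow_succ']
      noncomm_ring
    rw [Finset.sum_congr rfl this, ← Finset.mul_sum, ← ih]
    simp only [pow_zero, one_mul, Nat.sub_zero]
    rw [pow_succ' a (n + 1), pow_succ' b (n + 1)]
    noncomm_ring

lemma aux_norm_pow_le {E : Type*} [NormedRing E] (h1 : ‖(1 : E)‖ ≤ 1) (y : E) :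
    ∀ k : ℕ, ‖y ^ k‖ ≤ ‖y‖ ^ k := by
  intro k
  cases k with
  | zero => simpa using h1
  | succ k => exact norm_pow_le' y k.succ_pos

lemma aux_proj_pow_bound {E : Type*} [NormedRing E] (h1 : ‖(1 : E)‖ ≤ 1)
    (P s : E) (hP : P * P = P) {M : ℝ} (hM1 : 1 ≤ M) (hMP : ‖P‖ ≤ M) :
    ∀ j : ℕ, ‖(P + s) ^ j‖ ≤ M * (1 + M * ‖s‖) ^ j ∧
      ‖(P + s) ^ j * P‖ ≤ M * (1 + M * ‖s‖) ^ j := by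
  intro j
  have hs : (0:ℝ) ≤ ‖s‖ := norm_nonneg s
  induction j with
  | zero => constructor <;> simp <;> nlinarith
  | succ j ih =>
    obtain ⟨hf, hg⟩ := ih
    have hpos : (0:ℝ) ≤ M * (1 + M * ‖s‖) ^ j := by positivity
    have hexp : (P + s) ^ (j + 1) = (P + s) ^ j * P + (P + s) ^ j * s := by
      rw [pow_succ, mul_add]
    constructor
    · rw [hexp]
      calc ‖(P + s) ^ j * P + (P + s) ^ j * s‖
          ≤ ‖(P + s) ^ j * P‖ + ‖(P + s) ^ j‖ * ‖s‖ :=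
            (norm_add_le _ _).trans (by gcongr; exact norm_mul_le _ _)
        _ ≤ M * (1 + M * ‖s‖) ^ j + M * (1 + M * ‖s‖) ^ j * ‖s‖ := by gcongr
        _ ≤ M * (1 + M * ‖s‖) ^ (j + 1) := by
            rw [pow_succ]
            have h0 : (0:ℝ) ≤ (1 + M * ‖s‖) ^ j := by positivity
            have hM0 : (0:ℝ) ≤ M := le_trans zero_le_one hM1
            nlinarith [mul_nonneg (mul_nonneg (mul_nonneg hM0 h0) hs)
              (by linarith : (0:ℝ) ≤ M - 1)]
    · have hexp2 : (P + s) ^ (j + 1) * P = (P + s) ^ j * P + (P + s) ^ j * (s * P) := by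
        rw [hexp, add_mul, mul_assoc ((P+s)^j) P P, hP, mul_assoc]
      rw [hexp2]
      calc ‖(P + s) ^ j * P + (P + s) ^ j * (s * P)‖
          ≤ ‖(P + s) ^ j * P‖ + ‖(P + s) ^ j‖ * (‖s‖ * ‖P‖) := by
            refine (norm_add_le _ _).trans ?_
            gcongr
            exact (norm_mul_le _ _).trans (by gcongr; exact norm_mul_le _ _)
        _ ≤ M * (1 + M * ‖s‖) ^ j + M * (1 + M * ‖s‖) ^ j * (‖s‖ * M) := by gcongr
        _ ≤ M * (1 + M * ‖s‖) ^ (j + 1) := by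
            rw [pow_succ]
            have h0 : (0:ℝ) ≤ (1 + M * ‖s‖) ^ j := by positivity
            have hM0 : (0:ℝ) ≤ M := le_trans zero_le_one hM1
            nlinarith [mul_nonneg (mul_nonneg (mul_nonneg hM0 h0) hs)
              (by linarith : (0:ℝ) ≤ M - 1)]

lemma aux_one_add_div_pow_le {t : ℝ} (ht : 0 ≤ t) {j n : ℕ} (hn : 1 ≤ n) (hj : j ≤ n) :
    (1 + t / n) ^ j ≤ Real.exp t := by
  have hn0 : (0:ℝ) < n := by exact_mod_cast hn
  calc (1 + t / n) ^ j ≤ (Real.exp (t / n)) ^ j := by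
        have h := Real.add_one_le_exp (t / n)
        have h2 : (0:ℝ) ≤ 1 + t / n := by positivity
        exact pow_le_pow_left₀ h2 (by linarith) j
    _ = Real.exp (j * (t / n)) := by rw [← Real.exp_nat_mul]
    _ ≤ Real.exp t := by
        apply Real.exp_le_exp.mpr
        calc (j:ℝ) * (t / n) ≤ n * (t / n) := by
              have : (j:ℝ) ≤ (n:ℝ) := by exact_mod_cast hj
              have ht' : 0 ≤ t / (n:ℝ) := by positivity
              nlinarith
          _ = t := by field_simp

lemma aux_real_exp_tsum (r : ℝ) : ∑' n : ℕ, r ^ n / n.factorial = Real.exp r := by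
  rw [Real.exp_eq_exp_ℝ]
  exact (exp_eq_tsum_div (𝔸 := ℝ) ▸ rfl : exp r = _).symm

variable {E : Type*} [NormedRing E] [NormedAlgebra ℂ E] [CompleteSpace E]

lemma aux_norm_exp_le (h1 : ‖(1 : E)‖ ≤ 1) (x : E) : ‖exp x‖ ≤ Real.exp ‖x‖ := by
  have hnorm : ∀ n : ℕ, ‖((n.factorial : ℂ)⁻¹) • x ^ n‖ ≤ ‖x‖ ^ n / n.factorial := by
    intro n
    rw [norm_smul, norm_inv]
    have : ‖((n.factorial : ℂ))‖ = (n.factorial : ℝ) := by simp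
    rw [this, div_eq_inv_mul]
    refine mul_le_mul_of_nonneg_left ?_ (by positivity)
    cases n with
    | zero => simpa using h1
    | succ n => exact norm_pow_le' x n.succ_pos
  calc ‖exp x‖ ≤ ∑' n : ℕ, ‖((n.factorial : ℂ)⁻¹) • x ^ n‖ := by
        rw [exp_eq_tsum ℂ]
        exact norm_tsum_le_tsum_norm (norm_expSeries_summable' x)
    _ ≤ ∑' n : ℕ, ‖x‖ ^ n / n.factorial := by
        refine Summable.tsum_le_tsum hnorm (norm_expSeries_summable' x) ?_
        exact Real.summable_pow_div_factorial ‖x‖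
    _ = Real.exp ‖x‖ := aux_real_exp_tsum ‖x‖

lemma aux_exp_remainder (x : E) :
    ‖exp x - 1 - x‖ ≤ ‖x‖ ^ 2 * Real.exp ‖x‖ := by
  set f : ℕ → E := fun n => ((n.factorial : ℂ)⁻¹) • x ^ n with hf
  have hsum : HasSum f (exp x) := exp_series_hasSum_exp' x
  have hs2 : HasSum (fun n => f (n + 2)) (exp x - 1 - x) := by
    have key : HasSum (fun n => f (n + 2)) (exp x - (1 + x)) := by
      refine (hasSum_nat_add_iff (f := f) 2).mpr ?_
      have h0 : f 0 = 1 := by simp [hf]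
      have h1 : f 1 = x := by simp [hf]
      rw [Finset.sum_range_succ, Finset.sum_range_one, h0, h1]
      rw [sub_add_cancel]
      exact hsum
    convert key using 1
    abel
  have hnormsum : Summable fun n => ‖f (n + 2)‖ :=
    (summable_nat_add_iff 2).mpr (norm_expSeries_summable' x)
  have hterm : ∀ n : ℕ, ‖f (n + 2)‖ ≤ ‖x‖ ^ 2 * (‖x‖ ^ n / n.factorial) := by
    intro n
    have h1 : ‖f (n + 2)‖ ≤ ‖x‖ ^ (n + 2) / (n + 2).factorial := by
      rw [hf, norm_smul, norm_inv]
      simp only [Complex.norm_natCast]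
      rw [div_eq_inv_mul]
      refine mul_le_mul_of_nonneg_left ?_ (by positivity)
      exact norm_pow_le' x (by omega : 0 < n + 2)
    refine h1.trans ?_
    rw [pow_add, mul_comm (‖x‖ ^ n), mul_div_assoc]
    have hfac : (n.factorial : ℝ) ≤ ((n + 2).factorial : ℝ) :=
      Nat.cast_le.mpr (Nat.factorial_le (by omega))
    have hfp : (0:ℝ) < n.factorial := by positivity
    gcongr
  calc ‖exp x - 1 - x‖ ≤ ∑' n, ‖f (n + 2)‖ := hs2.tsum_eq ▸ norm_tsum_le_tsum_norm hnormsum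
    _ ≤ ∑' n : ℕ, ‖x‖ ^ 2 * (‖x‖ ^ n / n.factorial) := by
        refine Summable.tsum_le_tsum hterm hnormsum ?_
        exact (Real.summable_pow_div_factorial ‖x‖).mul_left _
    _ = ‖x‖ ^ 2 * Real.exp ‖x‖ := by rw [tsum_mul_left, aux_real_exp_tsum]

lemma aux_norm_inv_smul (A : E) {n : ℕ} (hn : 1 ≤ n) : ‖((n : ℂ))⁻¹ • A‖ = ‖A‖ / n := by
  rw [norm_smul, norm_inv, Complex.norm_natCast, inv_mul_eq_div]

lemma aux_exp_approx (h1 : ‖(1 : E)‖ ≤ 1) (A : E) {n : ℕ} (hn : 1 ≤ n) :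
    ‖(1 + ((n : ℂ))⁻¹ • A) ^ n - exp A‖
      ≤ ‖A‖ ^ 2 * (Real.exp ‖A‖ * Real.exp ‖A‖ * Real.exp ‖A‖) / n := by
  set x : E := ((n : ℂ))⁻¹ • A with hxdef
  have hnR : (0:ℝ) < n := by exact_mod_cast hn
  have hx : ‖x‖ = ‖A‖ / n := aux_norm_inv_smul A hn
  have hxA : ‖x‖ ≤ ‖A‖ := by rw [hx]; exact div_le_self (norm_nonneg A) (by exact_mod_cast hn)
  have hnx : (n : ℂ) ≠ 0 := Nat.cast_ne_zero.mpr (by omega)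
  have hexpA : exp A = exp x ^ n := by
    letI : NormedAlgebra ℚ E := NormedAlgebra.restrictScalars ℚ ℂ E
    rw [← exp_nsmul, ← Nat.cast_smul_eq_nsmul ℂ, hxdef, smul_smul, mul_inv_cancel₀ hnx, one_smul]
  have hexpj : ∀ j : ℕ, j ≤ n → ‖exp x ^ j‖ ≤ Real.exp ‖A‖ := by
    intro j hj
    letI : NormedAlgebra ℚ E := NormedAlgebra.restrictScalars ℚ ℂ E
    rw [← exp_nsmul]
    refine (aux_norm_exp_le h1 _).trans (Real.exp_le_exp.mpr ?_)
    rw [← Nat.cast_smul_eq_nsmul ℂ, norm_smul, Complex.norm_natCast, hx]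
    calc (j : ℝ) * (‖A‖ / n) ≤ (n : ℝ) * (‖A‖ / n) := by
          have : (j:ℝ) ≤ (n:ℝ) := by exact_mod_cast hj
          have : (0:ℝ) ≤ ‖A‖ / n := by positivity
          nlinarith
      _ = ‖A‖ := by field_simp
  have hbj : ∀ j : ℕ, j ≤ n → ‖(1 + x) ^ j‖ ≤ Real.exp ‖A‖ := by
    intro j hj
    refine (aux_norm_pow_le h1 _ j).trans ?_
    calc ‖1 + x‖ ^ j ≤ (1 + ‖A‖ / n) ^ j :=
          pow_le_pow_left₀ (norm_nonneg _) ((norm_add_le _ _).trans (by rw [hx]; simp [h1])) j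
      _ ≤ Real.exp ‖A‖ := aux_one_add_div_pow_le (norm_nonneg A) hn hj
  have hdiff : ‖exp x - (1 + x)‖ ≤ (‖A‖ / n) ^ 2 * Real.exp ‖A‖ := by
    have := aux_exp_remainder x
    rw [sub_sub] at this
    refine this.trans ?_
    have hAA : ‖A‖ / n ≤ ‖A‖ := div_le_self (norm_nonneg A) (by exact_mod_cast hn)
    rw [hx]
    gcongr
  obtain ⟨m, rfl⟩ : ∃ m, n = m + 1 := ⟨n - 1, by omega⟩
  rw [hexpA, ← neg_sub, norm_neg, aux_telescope]
  calc ‖∑ j ∈ Finset.range (m + 1), exp x ^ j * (exp x - (1 + x)) * (1 + x) ^ (m - j)‖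
      ≤ ∑ j ∈ Finset.range (m + 1),
          Real.exp ‖A‖ * ((‖A‖ / (m + 1 : ℕ)) ^ 2 * Real.exp ‖A‖) * Real.exp ‖A‖ := by
        refine norm_sum_le_of_le _ fun j hj => ?_
        have hj' : j ≤ m + 1 := by simp at hj; omega
        have hmj : m - j ≤ m + 1 := by omega
        calc ‖exp x ^ j * (exp x - (1 + x)) * (1 + x) ^ (m - j)‖
            ≤ ‖exp x ^ j‖ * ‖exp x - (1 + x)‖ * ‖(1 + x) ^ (m - j)‖ :=
              (norm_mul_le _ _).trans (by gcongr; exact norm_mul_le _ _)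
          _ ≤ Real.exp ‖A‖ * ((‖A‖ / (m + 1 : ℕ)) ^ 2 * Real.exp ‖A‖) * Real.exp ‖A‖ :=
              mul_le_mul (mul_le_mul (hexpj j hj') hdiff (norm_nonneg _)
                (Real.exp_nonneg _)) (hbj _ hmj) (norm_nonneg _) (by positivity)
    _ = (m + 1 : ℕ) * (Real.exp ‖A‖ * ((‖A‖ / (m + 1 : ℕ)) ^ 2 * Real.exp ‖A‖) * Real.exp ‖A‖) := by
        rw [Finset.sum_const, Finset.card_range, nsmul_eq_mul]
    _ = ‖A‖ ^ 2 * (Real.exp ‖A‖ * Real.exp ‖A‖ * Real.exp ‖A‖) / (m + 1 : ℕ) := by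
        field_simp

end aux

set_option maxHeartbeats 2000000 in
/-- Let `X` be a (complex) Banach space, `P` a bounded projection (`P² = P`) and `L` bounded.
Then `(P + L/n)^n → e^{PLP} P` in operator norm; more precisely
`(P + L/n)^n = (P + PLP/n)^n + O(1/n)` in norm and `(P + PLP/n)^n → e^{PLP}P` in norm. -/
theorem binomial_product_projection (X : Type*) [NormedAddCommGroup X] [NormedSpace ℂ X]
    [CompleteSpace X] (P L : X →L[ℂ] X) (hP : P * P = P) :
    Tendsto (fun n : ℕ => (P + ((n : ℂ))⁻¹ • L) ^ n) atTop
        (nhds (exp (P * L * P) * P)) ∧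
    (∃ c : ℝ, 0 ≤ c ∧ ∀ n : ℕ, 1 ≤ n →
        ‖(P + ((n : ℂ))⁻¹ • L) ^ n - (P + ((n : ℂ))⁻¹ • (P * L * P)) ^ n‖ ≤ c / n) ∧
    Tendsto (fun n : ℕ => (P + ((n : ℂ))⁻¹ • (P * L * P)) ^ n) atTop
        (nhds (exp (P * L * P) * P)) := by
  have h1 : ‖(1 : X →L[ℂ] X)‖ ≤ 1 := by
    rw [ContinuousLinearMap.one_def]; exact ContinuousLinearMap.norm_id_le
  set A : X →L[ℂ] X := P * L * P with hA
  have hPA : P * A = A := by rw [hA, ← mul_assoc, ← mul_assoc, hP]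
  have hAP : A * P = A := by rw [hA, mul_assoc, mul_assoc, hP, ← mul_assoc]
  have hcomm : Commute P A := hPA.trans hAP.symm
  -- factorization for the third limit
  have hfact : ∀ n : ℕ, 1 ≤ n →
      (P + ((n : ℂ))⁻¹ • A) ^ n = P * (1 + ((n : ℂ))⁻¹ • A) ^ n := by
    intro n hn
    have h1' : P * (1 + ((n : ℂ))⁻¹ • A) = P + ((n : ℂ))⁻¹ • A := by
      rw [mul_add, mul_one, mul_smul_comm, hPA]
    have hc : Commute P (1 + ((n : ℂ))⁻¹ • A) :=
      (Commute.one_right P).add_right (hcomm.smul_right _)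
    obtain ⟨m, rfl⟩ : ∃ m, n = m + 1 := ⟨n - 1, by omega⟩
    rw [← h1', hc.mul_pow, IsIdempotentElem.pow_succ_eq m hP]
  -- third limit
  have hCA : (0:ℝ) ≤ ‖A‖ ^ 2 * (Real.exp ‖A‖ * Real.exp ‖A‖ * Real.exp ‖A‖) := by positivity
  have t3' : Tendsto (fun n : ℕ => (1 + ((n : ℂ))⁻¹ • A) ^ n) atTop (nhds (exp A)) := by
    rw [← tendsto_sub_nhds_zero_iff]
    refine squeeze_zero_norm' ?_
      (tendsto_const_div_atTop_nhds_zero_nat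
        (‖A‖ ^ 2 * (Real.exp ‖A‖ * Real.exp ‖A‖ * Real.exp ‖A‖)))
    filter_upwards [eventually_ge_atTop 1] with n hn
    exact aux_exp_approx h1 A hn
  have t3 : Tendsto (fun n : ℕ => (P + ((n : ℂ))⁻¹ • A) ^ n) atTop (nhds (exp A * P)) := by
    have : Tendsto (fun n : ℕ => P * (1 + ((n : ℂ))⁻¹ • A) ^ n) atTop (nhds (P * exp A)) :=
      t3'.const_mul P
    rw [hcomm.exp_right.eq] at this
    refine this.congr' ?_
    filter_upwards [eventually_ge_atTop 1] with n hn
    exact (hfact n hn).symm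
  -- quantitative bound
  set M : ℝ := max 1 ‖P‖ with hM
  have hM1 : 1 ≤ M := le_max_left _ _
  have hMP : ‖P‖ ≤ M := le_max_right _ _
  have hM0 : (0:ℝ) ≤ M := le_trans zero_le_one hM1
  set D : X →L[ℂ] X := L - A with hD
  set KB : ℝ := M * Real.exp (M * ‖L‖) with hKB
  set KC : ℝ := M * Real.exp (M * ‖A‖) with hKC
  set K1 : ℝ := KB * ‖D‖ * KC with hK1
  set K2 : ℝ := KB * (‖L‖ * ‖D‖ * M) * ((1 + M * ‖L‖) * KC) with hK2
  have hKB0 : 0 ≤ KB := by positivity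
  have hKC0 : 0 ≤ KC := by positivity
  have hK10 : 0 ≤ K1 := by positivity
  have hK20 : 0 ≤ K2 := by positivity
  have key : ∀ n : ℕ, 1 ≤ n →
      ‖(P + ((n : ℂ))⁻¹ • L) ^ n - (P + ((n : ℂ))⁻¹ • A) ^ n‖ ≤ (2 * K1 + K2) / n := by
    intro n hn
    have hnR : (0:ℝ) < n := by exact_mod_cast hn
    set c : ℂ := ((n : ℂ))⁻¹ with hc
    set B : X →L[ℂ] X := P + c • L with hB
    set C : X →L[ℂ] X := P + c • A with hCdef
    -- uniform bounds on powers
    have hBj : ∀ j : ℕ, j ≤ n → ‖B ^ j‖ ≤ KB := by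
      intro j hj
      refine ((aux_proj_pow_bound h1 P (c • L) hP hM1 hMP j).1).trans ?_
      rw [hKB]
      gcongr
      rw [aux_norm_inv_smul L hn, ← mul_div_assoc]
      exact aux_one_add_div_pow_le (by positivity) hn hj
    have hBjP : ∀ j : ℕ, j ≤ n → ‖B ^ j * P‖ ≤ KB := by
      intro j hj
      refine ((aux_proj_pow_bound h1 P (c • L) hP hM1 hMP j).2).trans ?_
      rw [hKB]
      gcongr
      rw [aux_norm_inv_smul L hn, ← mul_div_assoc]
      exact aux_one_add_div_pow_le (by positivity) hn hj
    have hCj : ∀ j : ℕ, j ≤ n → ‖C ^ j‖ ≤ KC := by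
      intro j hj
      refine ((aux_proj_pow_bound h1 P (c • A) hP hM1 hMP j).1).trans ?_
      rw [hKC]
      gcongr
      rw [aux_norm_inv_smul A hn, ← mul_div_assoc]
      exact aux_one_add_div_pow_le (by positivity) hn hj
    have hBC : B - C = c • D := by rw [hB, hCdef, hD, smul_sub]; abel
    have hsm : ∀ Y : X →L[ℂ] X, ‖c • Y‖ = ‖Y‖ / (n:ℝ) := fun Y => by
      rw [hc]; exact aux_norm_inv_smul Y hn
    -- vanishing identity
    have hPDP : P * D * P = 0 := by
      rw [hD, mul_sub, sub_mul, hPA, hAP, ← hA, sub_self]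
    obtain ⟨m, rfl⟩ : ∃ m, n = m + 1 := ⟨n - 1, by omega⟩
    rw [aux_telescope B C m, hBC]
    -- termwise bound
    have hterm : ∀ j ∈ Finset.range (m + 1),
        ‖B ^ j * (c • D) * C ^ (m - j)‖ ≤
          (if j = 0 then K1 / (m+1:ℕ) else 0) + (if j = m then K1 / (m+1:ℕ) else 0)
            + K2 / ((m+1:ℕ):ℝ) ^ 2 := by
      intro j hj
      simp only [Finset.mem_range] at hj
      by_cases hcase : j = 0 ∨ j = m
      · -- generic K1/n bound
        have generic : ‖B ^ j * (c • D) * C ^ (m - j)‖ ≤ K1 / (m+1:ℕ) := by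
          calc ‖B ^ j * (c • D) * C ^ (m - j)‖
              ≤ ‖B ^ j‖ * ‖c • D‖ * ‖C ^ (m - j)‖ :=
                (norm_mul_le _ _).trans (by gcongr; exact norm_mul_le _ _)
            _ ≤ KB * (‖D‖ / (m+1:ℕ)) * KC := by
                gcongr
                · exact hBj j (by omega)
                · exact le_of_eq (hsm D)
                · exact hCj _ (by omega)
            _ = K1 / (m+1:ℕ) := by rw [hK1]; ring
        refine generic.trans ?_
        have h3 : (0:ℝ) ≤ K2 / ((m+1:ℕ):ℝ) ^ 2 := by positivity
        rcases hcase with h0 | hm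
        · rw [if_pos h0]
          have h2 : (0:ℝ) ≤ (if j = m then K1 / ((m+1:ℕ):ℝ) else 0) := by
            split <;> positivity
          linarith
        · rw [if_pos hm]
          have h2 : (0:ℝ) ≤ (if j = 0 then K1 / ((m+1:ℕ):ℝ) else 0) := by
            split <;> positivity
          linarith
      · push_neg at hcase
        obtain ⟨hj0, hjm⟩ := hcase
        rw [if_neg hj0, if_neg hjm, zero_add, zero_add]
        -- middle term: refined bound K2 / n^2
        obtain ⟨i, rfl⟩ : ∃ i, j = i + 1 := ⟨j - 1, by omega⟩
        have hmj : 1 ≤ m - (i + 1) := by omega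
        obtain ⟨k, hk⟩ : ∃ k, m - (i + 1) = k + 1 := ⟨m - (i+1) - 1, by omega⟩
        -- C = P * (1 + c • (L * P))
        have hCfac : C = P * (1 + c • (L * P)) := by
          rw [hCdef, mul_add, mul_one, mul_smul_comm, ← mul_assoc, hA]
        -- key contraction
        have hBvP : B ^ (i+1) * (c • D) * P = B ^ i * (c • L * (c • D * P)) := by
          have hstep : B ^ (i + 1) = B ^ i * P + B ^ i * (c • L) := by
            rw [pow_succ, hB, mul_add]
          have hz0 : P * (c • D * P) = 0 := by
            rw [smul_mul_assoc, mul_smul_comm, ← mul_assoc, hPDP, smul_zero]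
          rw [hstep, add_mul, add_mul]
          simp only [mul_assoc]
          rw [hz0, mul_zero, zero_add]
        have hrw : B ^ (i+1) * (c • D) * C ^ (m - (i+1))
            = (B ^ (i+1) * (c • D) * P) * ((1 + c • (L * P)) * C ^ k) := by
          rw [hk, pow_succ' C k]
          nth_rewrite 1 [hCfac]
          simp only [mul_assoc]
        rw [hrw, hBvP]
        have hnormLP : ‖1 + c • (L * P)‖ ≤ 1 + M * ‖L‖ := by
          refine (norm_add_le _ _).trans ?_
          have : ‖c • (L * P)‖ ≤ M * ‖L‖ := by
            rw [hsm (L * P)]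
            calc ‖L * P‖ / ((m+1:ℕ):ℝ) ≤ ‖L * P‖ :=
                  div_le_self (norm_nonneg _) (by exact_mod_cast hn)
              _ ≤ ‖L‖ * M := (norm_mul_le _ _).trans (by gcongr)
              _ = M * ‖L‖ := mul_comm _ _
          linarith [h1]
        have hmid : ‖B ^ i * (c • L * (c • D * P))‖
            ≤ KB * (‖L‖ / (m+1:ℕ) * (‖D‖ / (m+1:ℕ) * M)) := by
          calc ‖B ^ i * (c • L * (c • D * P))‖
              ≤ ‖B ^ i‖ * (‖c • L‖ * (‖c • D‖ * ‖P‖)) := by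
                refine (norm_mul_le _ _).trans ?_
                gcongr
                refine (norm_mul_le _ _).trans ?_
                gcongr
                exact norm_mul_le _ _
            _ ≤ KB * (‖L‖ / (m+1:ℕ) * (‖D‖ / (m+1:ℕ) * M)) := by
                rw [hsm L, hsm D]
                gcongr
                exact hBj i (by omega)
        calc ‖(B ^ i * (c • L * (c • D * P))) * ((1 + c • (L * P)) * C ^ k)‖
            ≤ ‖B ^ i * (c • L * (c • D * P))‖ * (‖1 + c • (L * P)‖ * ‖C ^ k‖) :=
              (norm_mul_le _ _).trans (by gcongr; exact norm_mul_le _ _)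
          _ ≤ (KB * (‖L‖ / (m+1:ℕ) * (‖D‖ / (m+1:ℕ) * M))) * ((1 + M * ‖L‖) * KC) := by
              have h01 : (0:ℝ) ≤ 1 + M * ‖L‖ := by positivity
              exact mul_le_mul hmid (mul_le_mul hnormLP (hCj k (by omega))
                (norm_nonneg _) h01) (by positivity) (by positivity)
          _ = K2 / ((m+1:ℕ):ℝ) ^ 2 := by rw [hK2]; field_simp
    calc ‖∑ j ∈ Finset.range (m + 1), B ^ j * (c • D) * C ^ (m - j)‖
        ≤ ∑ j ∈ Finset.range (m + 1),
            ((if j = 0 then K1 / (m+1:ℕ) else 0) + (if j = m then K1 / (m+1:ℕ) else 0)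
              + K2 / ((m+1:ℕ):ℝ) ^ 2) := norm_sum_le_of_le _ hterm
      _ = K1 / (m+1:ℕ) + K1 / (m+1:ℕ) + (m+1) * (K2 / ((m+1:ℕ):ℝ) ^ 2) := by
          rw [Finset.sum_add_distrib, Finset.sum_add_distrib, Finset.sum_const,
            Finset.card_range, nsmul_eq_mul]
          rw [Finset.sum_ite_eq' (Finset.range (m+1)) 0 (fun _ => K1 / ((m+1:ℕ):ℝ)),
            Finset.sum_ite_eq' (Finset.range (m+1)) m (fun _ => K1 / ((m+1:ℕ):ℝ))]
          simp
      _ ≤ (2 * K1 + K2) / (m+1:ℕ) := by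
          have : ((m:ℝ)+1) * (K2 / ((m+1:ℕ):ℝ) ^ 2) = K2 / ((m+1:ℕ):ℝ) := by
            push_cast
            field_simp
          push_cast at this ⊢
          rw [this]
          ring_nf
          linarith
  refine ⟨?_, ⟨2 * K1 + K2, by linarith, key⟩, t3⟩
  -- first limit from the bound and the third limit
  have hzero : Tendsto (fun n : ℕ =>
      (P + ((n : ℂ))⁻¹ • L) ^ n - (P + ((n : ℂ))⁻¹ • A) ^ n) atTop (nhds 0) := by
    refine squeeze_zero_norm' ?_ (tendsto_const_div_atTop_nhds_zero_nat (2 * K1 + K2))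
    filter_upwards [eventually_ge_atTop 1] with n hn
    exact key n hn
  have := hzero.add t3
  rw [zero_add] at this
  refine this.congr fun n => ?_
  abel
end

section
/- The Kraus operators K_l(η) := ∑_{n=0}^∞ √( C(n+l, n) (1 − |η|²)^l ) η^n |n⟩⟨n+l| of the attenuator channel satisfy the completeness relation ∑_{l=0}^∞ K_l(η)* K_l(η) = 1 (identity operator), for every η ∈ ℂ with |η| ≤ 1. -/
open scoped InnerProductSpace

section Aux

variable {H : Type*} [NormedAddCommGroup H] [InnerProductSpace ℂ H] [CompleteSpace H]
variable {ι : Type*} {v : ι → H}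

lemma aux_summable (hv : Orthonormal ℂ v) {c : ι → ℂ}
    (hc : Summable fun i => ‖c i‖ ^ 2) : Summable (fun i => c i • v i) := by
  have h := (hv.orthogonalFamily.summable_iff_norm_sq_summable c).2 (by simpa using hc)
  simpa only [LinearIsometry.toSpanSingleton_apply] using h

lemma aux_inner_tsum (hv : Orthonormal ℂ v) {c : ι → ℂ}
    (hc : Summable fun i => ‖c i‖ ^ 2) (x : H) :
    ⟪x, ∑' i, c i • v i⟫_ℂ = ∑' i, c i * ⟪x, v i⟫_ℂ := by
  have hs := aux_summable hv hc
  have h := (hs.hasSum.mapL (innerSL ℂ x)).tsum_eq.symm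
  simp only [innerSL_apply_apply, inner_smul_right] at h
  exact h

lemma aux_coeff (hv : Orthonormal ℂ v) {c : ι → ℂ}
    (hc : Summable fun i => ‖c i‖ ^ 2) (j : ι) :
    ⟪v j, ∑' i, c i • v i⟫_ℂ = c j := by
  rw [aux_inner_tsum hv hc]
  rw [tsum_eq_single j (fun i hi => by rw [hv.2 (Ne.symm hi), mul_zero])]
  have h1 : ⟪v j, v j⟫_ℂ = 1 := by
    rw [inner_self_eq_norm_sq_to_K, hv.1 j]
    norm_num
  rw [h1, mul_one]

lemma aux_norm_sq (hv : Orthonormal ℂ v) {c : ι → ℂ}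
    (hc : Summable fun i => ‖c i‖ ^ 2) :
    ‖∑' i, c i • v i‖ ^ 2 = ∑' i, ‖c i‖ ^ 2 := by
  set x := ∑' i, c i • v i with hx
  have h2 : ⟪x, x⟫_ℂ = ∑' i, c i * ⟪x, v i⟫_ℂ := aux_inner_tsum hv hc x
  have h3 : ∀ i, c i * ⟪x, v i⟫_ℂ = ((‖c i‖ ^ 2 : ℝ) : ℂ) := by
    intro i
    have : ⟪x, v i⟫_ℂ = (starRingEnd ℂ) (c i) := by
      rw [← inner_conj_symm, aux_coeff hv hc i]
    rw [this, Complex.mul_conj, Complex.normSq_eq_norm_sq]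
  have h4 : ⟪x, x⟫_ℂ = ((∑' i, ‖c i‖ ^ 2 : ℝ) : ℂ) := by
    rw [h2, Complex.ofReal_tsum]
    exact tsum_congr h3
  have h5 : ⟪x, x⟫_ℂ = ((‖x‖ : ℂ)) ^ 2 := inner_self_eq_norm_sq_to_K x
  rw [h5] at h4
  exact_mod_cast h4

end Aux

/-- The Kraus operators `K_l(η) = ∑_n √(C(n+l,n)(1−|η|²)^l) ηⁿ |n⟩⟨n+l|` of the attenuator
channel satisfy the completeness relation `∑_l K_l(η)* K_l(η) = 1` (the sum converging in the
strong operator topology), for every `η` with `|η| ≤ 1`. -/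
theorem attenuator_kraus_completeness {H : Type*} [NormedAddCommGroup H]
    [InnerProductSpace ℂ H] [CompleteSpace H] (e : HilbertBasis ℕ ℂ H)
    (η : ℂ) (hη : ‖η‖ ≤ 1) (K : ℕ → (H →L[ℂ] H))
    (hK : ∀ (l : ℕ) (ψ : H),
      K l ψ = ∑' n : ℕ,
        (((Real.sqrt ((Nat.choose (n + l) n : ℝ) * (1 - ‖η‖ ^ 2) ^ l) : ℝ) : ℂ)
            * η ^ n * ⟪e (n + l), ψ⟫_ℂ) • e n) :
    ∀ ψ : H, HasSum (fun l : ℕ => (ContinuousLinearMap.adjoint (K l)) (K l ψ)) ψ := by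
  intro ψ
  have habs : 0 ≤ ‖η‖ := norm_nonneg η
  set r2 : ℝ := ‖η‖ ^ 2 with hr2
  have hr0 : 0 ≤ r2 := sq_nonneg _
  have hr1 : r2 ≤ 1 := by nlinarith
  have h1r : 0 ≤ 1 - r2 := by linarith
  -- weights
  set w : ℕ → ℕ → ℝ := fun n l => (Nat.choose (n + l) n : ℝ) * (1 - r2) ^ l * r2 ^ n with hw
  have hw0 : ∀ n l, 0 ≤ w n l := fun n l => by
    apply mul_nonneg (mul_nonneg (Nat.cast_nonneg _) (pow_nonneg h1r _)) (pow_nonneg hr0 _)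
  have hwsum : ∀ m : ℕ, ∑ l ∈ Finset.range (m + 1), w (m - l) l = 1 := by
    intro m
    have hb := add_pow (1 - r2) r2 m
    have : ∑ l ∈ Finset.range (m + 1), w (m - l) l
        = ∑ l ∈ Finset.range (m + 1), (1 - r2) ^ l * r2 ^ (m - l) * (Nat.choose m l : ℝ) := by
      apply Finset.sum_congr rfl
      intro l hl
      have hlm : l ≤ m := Nat.lt_succ_iff.mp (Finset.mem_range.mp hl)
      rw [hw]
      simp only
      rw [Nat.sub_add_cancel hlm, Nat.choose_symm hlm]
      ring
    rw [this, ← hb]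
    norm_num
  have hw1 : ∀ n l, w n l ≤ 1 := by
    intro n l
    have h := hwsum (n + l)
    have hmem : l ∈ Finset.range (n + l + 1) := by
      simp [Nat.lt_succ_iff]
    have hs := Finset.single_le_sum (f := fun l' => w (n + l - l') l')
      (fun i _ => hw0 _ _) hmem
    rw [h] at hs
    simpa using hs
  -- the coefficients of K
  set γ : ℕ → ℕ → ℂ := fun n l =>
    ((Real.sqrt ((Nat.choose (n + l) n : ℝ) * (1 - r2) ^ l) : ℝ) : ℂ) * η ^ n with hγ
  have hγsq : ∀ n l, ‖γ n l‖ ^ 2 = w n l := by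
    intro n l
    have hx : 0 ≤ (Nat.choose (n + l) n : ℝ) * (1 - r2) ^ l :=
      mul_nonneg (Nat.cast_nonneg _) (pow_nonneg h1r _)
    rw [hγ]
    rw [norm_mul, mul_pow, norm_pow, Complex.norm_real, Real.norm_eq_abs,
      abs_of_nonneg (Real.sqrt_nonneg _), Real.sq_sqrt hx,
      ← pow_mul, mul_comm n 2, pow_mul, ← hr2, hw]
  -- Bessel summability
  have hBessel : ∀ x : H, Summable (fun m => ‖⟪e m, x⟫_ℂ‖ ^ 2) := fun x =>
    e.orthonormal.inner_products_summable x
  have hinj : ∀ l : ℕ, Function.Injective (fun n : ℕ => n + l) := fun l => add_left_injective l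
  have hBesselShift : ∀ (x : H) (l : ℕ), Summable (fun n => ‖⟪e (n + l), x⟫_ℂ‖ ^ 2) :=
    fun x l => (hBessel x).comp_injective (hinj l)
  -- summability of the defining series of K
  have hKsummand : ∀ (l : ℕ) (x : H),
      Summable (fun n => ‖γ n l * ⟪e (n + l), x⟫_ℂ‖ ^ 2) := by
    intro l x
    apply Summable.of_nonneg_of_le (fun n => by positivity) _ (hBesselShift x l)
    intro n
    rw [norm_mul, mul_pow]
    have h1 : ‖γ n l‖ ^ 2 ≤ 1 := by rw [hγsq]; exact hw1 n l
    exact mul_le_of_le_one_left (by positivity) h1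
  -- coefficient extraction
  have hKcoef : ∀ (l j : ℕ) (x : H), ⟪e j, K l x⟫_ℂ = γ j l * ⟪e (j + l), x⟫_ℂ := by
    intro l j x
    rw [hK l x]
    have hfun : (fun n : ℕ =>
        (((Real.sqrt ((Nat.choose (n + l) n : ℝ) * (1 - ‖η‖ ^ 2) ^ l) : ℝ) : ℂ)
            * η ^ n * ⟪e (n + l), x⟫_ℂ) • e n)
        = fun n : ℕ => (γ n l * ⟪e (n + l), x⟫_ℂ) • e n := by
      funext n
      rw [hγ, mul_assoc]
    rw [hfun]
    exact aux_coeff e.orthonormal (hKsummand l x) j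
  -- inner products of images
  have hconjγ : ∀ n l, (starRingEnd ℂ) (γ n l) * γ n l = ((w n l : ℝ) : ℂ) := by
    intro n l
    rw [mul_comm, Complex.mul_conj, Complex.normSq_eq_norm_sq, hγsq]
  have hinner : ∀ (l : ℕ) (φ x : H),
      ⟪K l φ, K l x⟫_ℂ
        = ∑' j, ((w j l : ℝ) : ℂ) * (⟪φ, e (j + l)⟫_ℂ * ⟪e (j + l), x⟫_ℂ) := by
    intro l φ x
    rw [← e.tsum_inner_mul_inner (K l φ) (K l x)]
    apply tsum_congr
    intro j
    rw [← inner_conj_symm (K l φ) (e j), hKcoef l j φ, hKcoef l j x]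
    rw [map_mul, inner_conj_symm]
    have := hconjγ j l
    calc (starRingEnd ℂ) (γ j l) * ⟪φ, e (j + l)⟫_ℂ * (γ j l * ⟪e (j + l), x⟫_ℂ)
        = ((starRingEnd ℂ) (γ j l) * γ j l) * (⟪φ, e (j + l)⟫_ℂ * ⟪e (j + l), x⟫_ℂ) := by ring
      _ = ((w j l : ℝ) : ℂ) * (⟪φ, e (j + l)⟫_ℂ * ⟪e (j + l), x⟫_ℂ) := by rw [this]
  -- summability of the adjoint-composition series
  have hwcoef_summ : ∀ (l : ℕ) (x : H),
      Summable (fun n => ‖((w n l : ℝ) : ℂ) * ⟪e (n + l), x⟫_ℂ‖ ^ 2) := by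
    intro l x
    apply Summable.of_nonneg_of_le (fun n => by positivity) _ (hBesselShift x l)
    intro n
    rw [norm_mul, mul_pow]
    have h1 : ‖((w n l : ℝ) : ℂ)‖ ^ 2 ≤ 1 := by
      rw [Complex.norm_real, Real.norm_eq_abs, abs_of_nonneg (hw0 n l)]
      nlinarith [hw0 n l, hw1 n l]
    exact mul_le_of_le_one_left (by positivity) h1
  have horthshift : ∀ l : ℕ, Orthonormal ℂ (fun n : ℕ => e (n + l)) := fun l =>
    e.orthonormal.comp _ (hinj l)
  -- adjoint formula
  have hadj : ∀ l : ℕ, (ContinuousLinearMap.adjoint (K l)) (K l ψ)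
      = ∑' n, (((w n l : ℝ) : ℂ) * ⟪e (n + l), ψ⟫_ℂ) • e (n + l) := by
    intro l
    apply ext_inner_left ℂ
    intro φ
    rw [ContinuousLinearMap.adjoint_inner_right, hinner l φ ψ]
    rw [aux_inner_tsum (horthshift l) (hwcoef_summ l ψ) φ]
    apply tsum_congr
    intro n
    ring
  -- reindexing
  set d : ℕ → ℕ → ℝ := fun l m => if l ≤ m then w (m - l) l else 0 with hd
  have hd0 : ∀ l m, 0 ≤ d l m := by
    intro l m
    rw [hd]
    dsimp only
    split
    · exact hw0 _ _
    · exact le_rfl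
  have hd1 : ∀ l m, d l m ≤ 1 := by
    intro l m
    rw [hd]
    dsimp only
    split
    · exact hw1 _ _
    · exact zero_le_one
  have hreidx : ∀ l : ℕ,
      (∑' n, (((w n l : ℝ) : ℂ) * ⟪e (n + l), ψ⟫_ℂ) • e (n + l))
        = ∑' m, (((d l m : ℝ) : ℂ) * ⟪e m, ψ⟫_ℂ) • e m := by
    intro l
    have hsupp : Function.support (fun m => (((d l m : ℝ) : ℂ) * ⟪e m, ψ⟫_ℂ) • e m)
        ⊆ Set.range (fun n : ℕ => n + l) := by
      intro m hm
      by_contra hc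
      simp only [Set.mem_range] at hc
      have hml : m < l := by
        by_contra h
        push_neg at h
        exact hc ⟨m - l, Nat.sub_add_cancel h⟩
      have hzero : d l m = 0 := by rw [hd]; exact if_neg (not_le.mpr hml)
      apply hm
      simp [hzero]
    have h := (hinj l).tsum_eq hsupp
    rw [← h]
    apply tsum_congr
    intro n
    have h1 : d l (n + l) = w n l := by
      rw [hd]
      dsimp only
      rw [if_pos (Nat.le_add_left l n)]
      congr 1
      omega
    rw [h1]
  -- summability of reindexed coefficients
  have hdcoef_summ : ∀ (t : ℕ → ℝ), (∀ m, 0 ≤ t m) → (∀ m, t m ≤ 1) →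
      Summable (fun m => ‖((t m : ℝ) : ℂ) * ⟪e m, ψ⟫_ℂ‖ ^ 2) := by
    intro t ht0 ht1
    apply Summable.of_nonneg_of_le (fun m => by positivity) _ (hBessel ψ)
    intro m
    rw [norm_mul, mul_pow]
    have h1 : ‖((t m : ℝ) : ℂ)‖ ^ 2 ≤ 1 := by
      rw [Complex.norm_real, Real.norm_eq_abs, abs_of_nonneg (ht0 m)]
      nlinarith [ht0 m, ht1 m]
    exact mul_le_of_le_one_left (by positivity) h1
  have hdsummand : ∀ l : ℕ,
      Summable (fun m => (((d l m : ℝ) : ℂ) * ⟪e m, ψ⟫_ℂ) • e m) := fun l =>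
    aux_summable e.orthonormal (hdcoef_summ (d l) (hd0 l) (hd1 l))
  -- partial sums of weights
  have hσfull : ∀ (s : Finset ℕ) (m : ℕ), Finset.range (m + 1) ⊆ s →
      ∑ l ∈ s, d l m = 1 := by
    intro s m hs
    have h1 : ∑ l ∈ Finset.range (m + 1), d l m = ∑ l ∈ s, d l m := by
      apply Finset.sum_subset hs
      intro x _ hx
      have hmx : m < x := by
        simp only [Finset.mem_range, Nat.lt_succ_iff, not_le] at hx
        exact hx
      rw [hd]
      exact if_neg (by omega)
    rw [← h1]
    have h2 : ∑ l ∈ Finset.range (m + 1), d l m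
        = ∑ l ∈ Finset.range (m + 1), w (m - l) l := by
      apply Finset.sum_congr rfl
      intro l hl
      have hlm : l ≤ m := Nat.lt_succ_iff.mp (Finset.mem_range.mp hl)
      rw [hd]
      exact if_pos hlm
    rw [h2, hwsum m]
  have hσ0 : ∀ (s : Finset ℕ) (m : ℕ), 0 ≤ ∑ l ∈ s, d l m := fun s m =>
    Finset.sum_nonneg (fun l _ => hd0 l m)
  have hσ1 : ∀ (s : Finset ℕ) (m : ℕ), ∑ l ∈ s, d l m ≤ 1 := by
    intro s m
    have h1 : ∑ l ∈ s, d l m ≤ ∑ l ∈ s ∪ Finset.range (m + 1), d l m :=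
      Finset.sum_le_sum_of_subset_of_nonneg Finset.subset_union_left
        (fun l _ _ => hd0 l m)
    rw [hσfull _ m Finset.subset_union_right] at h1
    exact h1
  -- rewrite the goal
  have hgoal : (fun l : ℕ => (ContinuousLinearMap.adjoint (K l)) (K l ψ))
      = fun l : ℕ => ∑' m, (((d l m : ℝ) : ℂ) * ⟪e m, ψ⟫_ℂ) • e m :=
    funext fun l => (hadj l).trans (hreidx l)
  rw [hgoal, HasSum, Metric.tendsto_nhds]
  intro ε hε
  -- choose a cutoff
  have htail := tendsto_sum_nat_add (f := fun m => ‖⟪e m, ψ⟫_ℂ‖ ^ 2)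
  have hε2 : (0 : ℝ) < ε ^ 2 := by positivity
  obtain ⟨N, hN⟩ := (htail.eventually (gt_mem_nhds hε2)).exists
  rw [SummationFilter.unconditional_filter, Filter.eventually_atTop]
  refine ⟨Finset.range N, fun s hs => ?_⟩
  -- the difference
  set t : ℕ → ℂ := fun m => (((∑ l ∈ s, d l m) - 1 : ℝ) : ℂ) * ⟪e m, ψ⟫_ℂ with ht
  have ht_coef : ∀ m, ‖t m‖ ^ 2 ≤ ‖⟪e m, ψ⟫_ℂ‖ ^ 2 := by
    intro m
    rw [ht]
    dsimp only
    rw [norm_mul, mul_pow]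
    have h1 : ‖(((∑ l ∈ s, d l m) - 1 : ℝ) : ℂ)‖ ^ 2 ≤ 1 := by
      rw [Complex.norm_real, Real.norm_eq_abs, sq_abs]
      nlinarith [hσ0 s m, hσ1 s m]
    exact mul_le_of_le_one_left (by positivity) h1
  have ht_summ : Summable (fun m => ‖t m‖ ^ 2) :=
    Summable.of_nonneg_of_le (fun m => by positivity) ht_coef (hBessel ψ)
  have hψrepr : ψ = ∑' m, ⟪e m, ψ⟫_ℂ • e m := by
    have h := (e.hasSum_repr ψ).tsum_eq
    conv_lhs => rw [← h]
    exact tsum_congr (fun m => by rw [e.repr_apply_apply])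
  have hψsumm : Summable (fun m => ⟪e m, ψ⟫_ℂ • e m) := by
    apply aux_summable e.orthonormal
    exact hBessel ψ
  have hD : (∑ l ∈ s, ∑' m, (((d l m : ℝ) : ℂ) * ⟪e m, ψ⟫_ℂ) • e m) - ψ
      = ∑' m, t m • e m := by
    have hps : ∑ l ∈ s, ∑' m, (((d l m : ℝ) : ℂ) * ⟪e m, ψ⟫_ℂ) • e m
        = ∑' m, (((∑ l ∈ s, d l m : ℝ) : ℂ) * ⟪e m, ψ⟫_ℂ) • e m := by
      rw [← Summable.tsum_finsetSum (fun l _ => hdsummand l)]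
      apply tsum_congr
      intro m
      rw [← Finset.sum_smul, ← Finset.sum_mul]
      norm_cast
    rw [hps]
    nth_rewrite 2 [hψrepr]
    have hsσ : Summable (fun m => (((∑ l ∈ s, d l m : ℝ) : ℂ) * ⟪e m, ψ⟫_ℂ) • e m) :=
      aux_summable e.orthonormal (hdcoef_summ (fun m => ∑ l ∈ s, d l m) (hσ0 s) (hσ1 s))
    rw [← Summable.tsum_sub hsσ hψsumm]
    apply tsum_congr
    intro m
    rw [ht, ← sub_smul]
    congr 1
    push_cast
    ring
  rw [dist_eq_norm, hD]
  have hnorm : ‖∑' m, t m • e m‖ ^ 2 = ∑' m, ‖t m‖ ^ 2 :=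
    aux_norm_sq e.orthonormal ht_summ
  have ht_zero : ∀ m < N, t m = 0 := by
    intro m hm
    have hsub : Finset.range (m + 1) ⊆ s := by
      refine subset_trans ?_ hs
      intro x hx
      simp only [Finset.mem_range] at hx ⊢
      omega
    rw [ht]
    dsimp only
    rw [hσfull s m hsub]
    norm_num
  have hbound : ∑' m, ‖t m‖ ^ 2 ≤ ∑' k, ‖⟪e (k + N), ψ⟫_ℂ‖ ^ 2 := by
    have hsupp : Function.support (fun m => ‖t m‖ ^ 2)
        ⊆ Set.range (fun k : ℕ => k + N) := by
      intro m hm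
      by_contra hc
      simp only [Set.mem_range] at hc
      have hmN : m < N := by
        by_contra h
        push_neg at h
        exact hc ⟨m - N, Nat.sub_add_cancel h⟩
      apply hm
      simp [ht_zero m hmN]
    calc ∑' m, ‖t m‖ ^ 2 = ∑' k, ‖t (k + N)‖ ^ 2 := ((hinj N).tsum_eq hsupp).symm
      _ ≤ ∑' k, ‖⟪e (k + N), ψ⟫_ℂ‖ ^ 2 := by
          apply Summable.tsum_le_tsum (fun k => ht_coef (k + N))
            (ht_summ.comp_injective (hinj N)) (hBesselShift ψ N)
  have hlt : ‖∑' m, t m • e m‖ ^ 2 < ε ^ 2 := by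
    rw [hnorm]
    exact lt_of_le_of_lt hbound hN
  exact lt_of_pow_lt_pow_left₀ 2 (le_of_lt hε) hlt
end

section
/- For each l ∈ ℕ₀ and η ∈ ℂ with |η| ≤ 1, applying the Kraus operator K_l(η) = ∑_n √(C(n+l,n)(1−|η|²)^l) η^n |n⟩⟨n+l| to a coherent state projector and summing gives ∑_{l=0}^∞ K_l(η)|α⟩⟨α|K_l(η)* = |ηα⟩⟨ηα| for every α ∈ ℂ. -/
open scoped InnerProductSpace

/-- The coherent state vector `|α⟩ = e^{−|α|²/2} ∑ (αⁿ/√n!) |n⟩` associated to a Hilbert basis. -/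
noncomputable def coherentState {H : Type*} [NormedAddCommGroup H] [InnerProductSpace ℂ H]
    [CompleteSpace H] (e : HilbertBasis ℕ ℂ H) (α : ℂ) : H :=
  Real.exp (-(‖α‖) ^ 2 / 2) •
    ∑' n : ℕ, (α ^ n / ((Real.sqrt (Nat.factorial n) : ℝ) : ℂ)) • e n

namespace AttenuatorAux

variable {H : Type*} [NormedAddCommGroup H] [InnerProductSpace ℂ H] [CompleteSpace H]

/-- Normalized coherent coefficients. -/
noncomputable def c (β : ℂ) (n : ℕ) : ℂ := β ^ n / ((Real.sqrt (Nat.factorial n) : ℝ) : ℂ)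

lemma sqrt_fact_pos (n : ℕ) : 0 < Real.sqrt (Nat.factorial n) :=
  Real.sqrt_pos.2 (by exact_mod_cast Nat.factorial_pos n)

lemma norm_c (β : ℂ) (n : ℕ) :
    ‖c β n‖ = (‖β‖) ^ n / Real.sqrt (Nat.factorial n) := by
  simp [c, map_div₀, map_pow,
    abs_of_nonneg (Real.sqrt_nonneg _)]

lemma summable_c_smul (e : HilbertBasis ℕ ℂ H) (β : ℂ) :
    Summable (fun n : ℕ => c β n • e n) := by
  have hnorm : ∀ n : ℕ, ‖c β n • e n‖ = (‖β‖) ^ n / Real.sqrt (Nat.factorial n) := by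
    intro n
    rw [norm_smul, e.orthonormal.1 n, mul_one, norm_c]
  apply summable_of_ratio_norm_eventually_le (r := 1/2) (by norm_num)
  filter_upwards [Filter.eventually_ge_atTop ⌈(2 * ‖β‖) ^ 2⌉₊] with n hn
  rw [hnorm, hnorm]
  have hsn : (0:ℝ) < Real.sqrt (n + 1) := Real.sqrt_pos.2 (by positivity)
  have h1 : Real.sqrt (Nat.factorial (n + 1))
      = Real.sqrt ((n:ℝ) + 1) * Real.sqrt (Nat.factorial n) := by
    rw [← Real.sqrt_mul (by positivity), Nat.factorial_succ]
    push_cast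
    ring_nf
  have key : ‖β‖ / Real.sqrt ((n:ℝ) + 1) ≤ 1 / 2 := by
    rw [div_le_div_iff₀ hsn (by norm_num)]
    have h2 : 2 * ‖β‖ ≤ Real.sqrt ((n:ℝ) + 1) := by
      rw [Real.le_sqrt (by positivity) (by positivity)]
      calc (2 * ‖β‖) ^ 2 ≤ (⌈(2 * ‖β‖) ^ 2⌉₊ : ℝ) := Nat.le_ceil _
        _ ≤ (n : ℝ) := by exact_mod_cast hn
        _ ≤ (n : ℝ) + 1 := by linarith
    linarith
  calc ‖β‖ ^ (n + 1) / Real.sqrt (Nat.factorial (n + 1))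
      = (‖β‖ / Real.sqrt ((n:ℝ) + 1))
        * (‖β‖ ^ n / Real.sqrt (Nat.factorial n)) := by
        rw [h1, pow_succ]; ring
    _ ≤ (1 / 2) * (‖β‖ ^ n / Real.sqrt (Nat.factorial n)) := by
        apply mul_le_mul_of_nonneg_right key (by positivity)
    _ = 1 / 2 * (‖β‖ ^ n / Real.sqrt (Nat.factorial n)) := by ring

lemma inner_tsum_c (e : HilbertBasis ℕ ℂ H) (β : ℂ) (m : ℕ) :
    ⟪e m, ∑' n : ℕ, c β n • e n⟫_ℂ = c β m := by
  have hs := summable_c_smul e β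
  have hmap : ⟪e m, ∑' n : ℕ, c β n • e n⟫_ℂ
      = ∑' n : ℕ, ⟪e m, c β n • e n⟫_ℂ := by
    exact (innerSL ℂ (e m)).map_tsum hs
  rw [hmap]
  have horth := orthonormal_iff_ite.mp e.orthonormal
  have : ∀ n : ℕ, ⟪e m, c β n • e n⟫_ℂ = if n = m then c β m else 0 := by
    intro n
    rw [inner_smul_right, horth]
    by_cases h : n = m
    · simp [h]
    · simp [h, Ne.symm h]
  simp_rw [this]
  exact tsum_ite_eq m (fun _ => c β m)

lemma coherent_eq (e : HilbertBasis ℕ ℂ H) (α : ℂ) :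
    coherentState e α
      = ((Real.exp (-(‖α‖) ^ 2 / 2) : ℝ) : ℂ) • ∑' n : ℕ, c α n • e n := by
  rw [coherentState, Complex.coe_smul]
  rfl

lemma inner_basis_coherent (e : HilbertBasis ℕ ℂ H) (α : ℂ) (m : ℕ) :
    ⟪e m, coherentState e α⟫_ℂ
      = ((Real.exp (-(‖α‖) ^ 2 / 2) : ℝ) : ℂ) * c α m := by
  rw [coherent_eq, inner_smul_right, inner_tsum_c]

end AttenuatorAux


open AttenuatorAux in
/-- For the Kraus operators `K_l(η)` of the attenuator channel and any coherent state `|α⟩`,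
`∑_l K_l(η)|α⟩⟨α|K_l(η)* = |ηα⟩⟨ηα|`, i.e. for every `x`,
`∑_l ⟨K_l α, x⟩ K_l α = ⟨ηα, x⟩ |ηα⟩` (sum in the strong topology). -/
theorem attenuator_kraus_coherent {H : Type*} [NormedAddCommGroup H]
    [InnerProductSpace ℂ H] [CompleteSpace H] (e : HilbertBasis ℕ ℂ H)
    (η : ℂ) (hη : ‖η‖ ≤ 1) (K : ℕ → (H →L[ℂ] H))
    (hK : ∀ (l : ℕ) (ψ : H),
      K l ψ = ∑' n : ℕ,
        (((Real.sqrt ((Nat.choose (n + l) n : ℝ) * (1 - (‖η‖) ^ 2) ^ l) : ℝ) : ℂ)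
            * η ^ n * ⟪e (n + l), ψ⟫_ℂ) • e n)
    (α : ℂ) :
    ∀ x : H, HasSum (fun l : ℕ => ⟪K l (coherentState e α), x⟫_ℂ • K l (coherentState e α))
      (⟪coherentState e (η * α), x⟫_ℂ • coherentState e (η * α)) := by
  intro x
  set s : ℝ := Real.sqrt (1 - (‖η‖) ^ 2) with hs
  have hη2 : (0:ℝ) ≤ 1 - (‖η‖) ^ 2 := by
    have := norm_nonneg η
    nlinarith
  have hs2 : s ^ 2 = 1 - (‖η‖) ^ 2 := Real.sq_sqrt hη2
  have hs0 : (0:ℝ) ≤ s := Real.sqrt_nonneg _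
  -- the scalar coefficients
  set cl : ℕ → ℂ := fun l =>
    ((Real.exp ((‖η * α‖) ^ 2 / 2 - (‖α‖) ^ 2 / 2) : ℝ) : ℂ)
      * ((s : ℝ) : ℂ) ^ l * α ^ l / ((Real.sqrt (Nat.factorial l) : ℝ) : ℂ) with hcl
  -- step 1: K l |α⟩ = cl l • |ηα⟩
  have hKc : ∀ l : ℕ, K l (coherentState e α) = cl l • coherentState e (η * α) := by
    intro l
    rw [hK]
    set dl : ℂ := ((Real.exp (-(‖α‖) ^ 2 / 2) : ℝ) : ℂ)
      * ((s : ℝ) : ℂ) ^ l * α ^ l / ((Real.sqrt (Nat.factorial l) : ℝ) : ℂ) with hdl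
    have hterm : ∀ n : ℕ,
        (((Real.sqrt ((Nat.choose (n + l) n : ℝ) * (1 - (‖η‖) ^ 2) ^ l) : ℝ) : ℂ)
            * η ^ n * ⟪e (n + l), coherentState e α⟫_ℂ)
          = dl * c (η * α) n := by
      intro n
      rw [inner_basis_coherent]
      have hsqrt : Real.sqrt ((Nat.choose (n + l) n : ℝ) * (1 - (‖η‖) ^ 2) ^ l)
          = Real.sqrt (Nat.factorial (n + l))
              / (Real.sqrt (Nat.factorial n) * Real.sqrt (Nat.factorial l)) * s ^ l := by
        have hpow : (1 - (‖η‖) ^ 2) ^ l = (s ^ l) ^ 2 := by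
          rw [← pow_mul, mul_comm l 2, pow_mul, hs2]
        have hC : (Nat.choose (n + l) n : ℝ)
            = (Nat.factorial (n + l) : ℝ) / ((Nat.factorial n : ℝ) * (Nat.factorial l : ℝ)) := by
          rw [eq_div_iff (by positivity), ← mul_assoc]
          have h := Nat.choose_mul_factorial_mul_factorial (Nat.le_add_right n l)
          rw [Nat.add_sub_cancel_left] at h
          exact_mod_cast congrArg (Nat.cast (R := ℝ)) h
        rw [hC, hpow, Real.sqrt_mul (by positivity), Real.sqrt_sq (by positivity),
          Real.sqrt_div (by positivity), Real.sqrt_mul (by positivity)]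
      rw [hsqrt, hdl]
      simp only [c]
      push_cast
      have hn0 : ((Real.sqrt (Nat.factorial n) : ℝ) : ℂ) ≠ 0 :=
        Complex.ofReal_ne_zero.2 (sqrt_fact_pos n).ne'
      have hl0 : ((Real.sqrt (Nat.factorial l) : ℝ) : ℂ) ≠ 0 :=
        Complex.ofReal_ne_zero.2 (sqrt_fact_pos l).ne'
      have hnl0 : ((Real.sqrt (Nat.factorial (n + l)) : ℝ) : ℂ) ≠ 0 :=
        Complex.ofReal_ne_zero.2 (sqrt_fact_pos (n + l)).ne'
      field_simp
      rw [pow_add, mul_pow]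
      ring
    simp_rw [hterm, mul_smul]
    rw [Summable.tsum_const_smul dl (summable_c_smul e (η * α))]
    rw [coherent_eq e (η * α), smul_smul]
    congr 1
    have e1 : ((Real.exp ((‖η * α‖) ^ 2 / 2 - (‖α‖) ^ 2 / 2) : ℝ) : ℂ)
          * ((Real.exp (-(‖η * α‖) ^ 2 / 2) : ℝ) : ℂ)
        = ((Real.exp (-(‖α‖) ^ 2 / 2) : ℝ) : ℂ) := by
      rw [← Complex.ofReal_mul, ← Real.exp_add]
      ring_nf
    rw [hcl, hdl, ← e1]
    ring
  -- step 2: ∑ ‖cl l‖² = 1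
  have habs : ‖η * α‖ = ‖η‖ * ‖α‖ := norm_mul _ _
  have hnormsq : ∀ l : ℕ, ‖cl l‖ ^ 2
      = Real.exp (2 * ((‖η * α‖) ^ 2 / 2 - (‖α‖) ^ 2 / 2))
          * ((s ^ 2 * (‖α‖) ^ 2) ^ l / (Nat.factorial l : ℝ)) := by
    intro l
    have : ‖cl l‖ = Real.exp ((‖η * α‖) ^ 2 / 2 - (‖α‖) ^ 2 / 2)
        * s ^ l * (‖α‖) ^ l / Real.sqrt (Nat.factorial l) := by
      rw [hcl]
      rw [norm_div, norm_mul, norm_mul, norm_pow, norm_pow]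
      simp only [Complex.norm_real, Real.norm_eq_abs]
      rw [Real.abs_exp, abs_of_nonneg hs0, abs_of_nonneg (Real.sqrt_nonneg _)]
    rw [this, div_pow, Real.sq_sqrt (by positivity : (0:ℝ) ≤ ((Nat.factorial l : ℕ) : ℝ)),
      show Real.exp (2 * ((‖η * α‖) ^ 2 / 2 - (‖α‖) ^ 2 / 2))
          = Real.exp ((‖η * α‖) ^ 2 / 2 - (‖α‖) ^ 2 / 2) ^ 2 from by
        rw [two_mul, Real.exp_add]; ring]
    ring
  -- HasSum of the squared norms
  have hexp : HasSum (fun l : ℕ => ‖cl l‖ ^ 2) 1 := by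
    have h1 : HasSum (fun l : ℕ => (s ^ 2 * (‖α‖) ^ 2) ^ l / (Nat.factorial l : ℝ))
        (Real.exp (s ^ 2 * (‖α‖) ^ 2)) := by
      rw [Real.exp_eq_exp_ℝ]
      exact NormedSpace.expSeries_div_hasSum_exp (s ^ 2 * (‖α‖) ^ 2)
    have h2 := h1.mul_left
      (Real.exp (2 * ((‖η * α‖) ^ 2 / 2 - (‖α‖) ^ 2 / 2)))
    rw [← Real.exp_add] at h2
    have h3 : 2 * ((‖η * α‖) ^ 2 / 2 - (‖α‖) ^ 2 / 2)
        + s ^ 2 * (‖α‖) ^ 2 = 0 := by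
      rw [hs2, habs]; ring
    rw [h3, Real.exp_zero] at h2
    simpa only [← hnormsq] using h2
  -- assemble
  set v : H := coherentState e (η * α) with hv
  have hterm2 : ∀ l : ℕ, ⟪cl l • v, x⟫_ℂ • (cl l • v)
      = (‖cl l‖ ^ 2) • (⟪v, x⟫_ℂ • v) := by
    intro l
    rw [inner_smul_left, smul_smul]
    have hkey : (starRingEnd ℂ) (cl l) * ⟪v, x⟫_ℂ * cl l
        = ((‖cl l‖ ^ 2 : ℝ) : ℂ) * ⟪v, x⟫_ℂ := by
      have hmc : cl l * (starRingEnd ℂ) (cl l) = ((Complex.normSq (cl l) : ℝ) : ℂ) :=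
        Complex.mul_conj (cl l)
      calc (starRingEnd ℂ) (cl l) * ⟪v, x⟫_ℂ * cl l
          = (cl l * (starRingEnd ℂ) (cl l)) * ⟪v, x⟫_ℂ := by ring
        _ = ((Complex.normSq (cl l) : ℝ) : ℂ) * ⟪v, x⟫_ℂ := by rw [hmc]
        _ = ((‖cl l‖ ^ 2 : ℝ) : ℂ) * ⟪v, x⟫_ℂ := by
            rw [Complex.normSq_eq_norm_sq]
    rw [hkey, mul_smul, Complex.coe_smul]
  simp only [hKc, hterm2]
  simpa using hexp.smul_const (⟪v, x⟫_ℂ • v)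
end

section
/- For a positive trace class operator ρ with 1 = Tr(ρ) and |η| ≤ 1, the attenuator channel satisfies 1 − ⟨0|Φ_η^att(ρ)|0⟩ = ∑_{l=0}^∞ (1 − (1−|η|²)^l) ⟨l|ρ|l⟩ ≤ |η|² Tr(Nρ). -/
open scoped InnerProductSpace ENNReal

-- binomial term bound
lemma binom_term_le_one {t : ℝ} (ht0 : 0 ≤ t) (ht1 : t ≤ 1) (n l : ℕ) :
    (Nat.choose (n + l) n : ℝ) * (1 - t) ^ l * t ^ n ≤ 1 := by
  have h := add_pow t (1 - t) (n + l)
  rw [add_sub_cancel, one_pow] at h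
  have hterm : t ^ n * (1 - t) ^ (n + l - n) * (Nat.choose (n + l) n : ℝ)
      ≤ ∑ k ∈ Finset.range (n + l + 1), t ^ k * (1 - t) ^ (n + l - k) * (Nat.choose (n + l) k : ℝ) := by
    apply Finset.single_le_sum (f := fun k => t ^ k * (1 - t) ^ (n + l - k) * (Nat.choose (n + l) k : ℝ))
    · intro i _
      have h1 : (0:ℝ) ≤ 1 - t := by linarith
      positivity
    · simp [Nat.lt_succ_iff]
  rw [← h] at hterm
  simpa [Nat.add_sub_cancel_left, mul_comm, mul_assoc, mul_left_comm] using hterm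

-- Bernoulli
lemma one_sub_pow_le {t : ℝ} (ht1 : t ≤ 1) (l : ℕ) : 1 - (l : ℝ) * t ≤ (1 - t) ^ l := by
  have := one_add_mul_le_pow (a := -t) (by linarith) l
  simpa [sub_eq_add_neg, mul_comm] using this

-- summability of coefficient family
lemma coeff_summable {H : Type*} [NormedAddCommGroup H]
    [InnerProductSpace ℂ H] [CompleteSpace H] (e : HilbertBasis ℕ ℂ H)
    (η : ℂ) (hη : ‖η‖ ≤ 1) (l : ℕ) (z : H) :
    Summable (fun n : ℕ =>
      (((Real.sqrt ((Nat.choose (n + l) n : ℝ) * (1 - (‖η‖) ^ 2) ^ l) : ℝ) : ℂ)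
          * η ^ n * ⟪e (n + l), z⟫_ℂ) • e n) := by
  set t : ℝ := ‖η‖ ^ 2 with ht
  have ht0 : 0 ≤ t := sq_nonneg _
  have ht1 : t ≤ 1 := pow_le_one₀ (norm_nonneg η) hη
  set c : ℕ → ℂ := fun n =>
    (((Real.sqrt ((Nat.choose (n + l) n : ℝ) * (1 - t) ^ l) : ℝ) : ℂ)
        * η ^ n * ⟪e (n + l), z⟫_ℂ) with hc
  have key := (e.orthonormal.orthogonalFamily.summable_iff_norm_sq_summable c)
  have : Summable fun n => ‖c n‖ ^ 2 := by
    have hb : Summable (fun m : ℕ => ‖⟪e m, z⟫_ℂ‖ ^ 2) := by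
      have := (lp.memℓp (e.repr z)).summable (p := 2) (by norm_num)
      have h2 : ∀ m : ℕ, ‖e.repr z m‖ ^ (2 : ℝ≥0∞).toReal = ‖⟪e m, z⟫_ℂ‖ ^ 2 := by
        intro m
        rw [e.repr_apply_apply]
        norm_num [Real.rpow_natCast]
      exact this.congr h2
    have hb' : Summable (fun n : ℕ => ‖⟪e (n + l), z⟫_ℂ‖ ^ 2) :=
      hb.comp_injective (add_left_injective l)
    refine Summable.of_nonneg_of_le (fun n => by positivity) (fun n => ?_) hb'
    have h1t : (0:ℝ) ≤ 1 - t := by linarith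
    have hcn : ‖c n‖ ^ 2 = ((Nat.choose (n + l) n : ℝ) * (1 - t) ^ l) * t ^ n
        * ‖⟪e (n + l), z⟫_ℂ‖ ^ 2 := by
      rw [hc]
      simp only [norm_mul, mul_pow, Complex.norm_real, Real.norm_eq_abs, norm_pow]
      rw [abs_of_nonneg (Real.sqrt_nonneg _),
        Real.sq_sqrt (by positivity)]
      have h3 : (‖η‖ ^ n) ^ 2 = t ^ n := by
        rw [ht, ← pow_mul, ← pow_mul, mul_comm]
      rw [h3]
    rw [hcn]
    have hle := binom_term_le_one ht0 ht1 n l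
    nlinarith [norm_nonneg (⟪e (n + l), z⟫_ℂ), sq_nonneg ‖⟪e (n + l), z⟫_ℂ‖]
  exact key.mpr this

lemma adjoint_apply_e0 {H : Type*} [NormedAddCommGroup H]
    [InnerProductSpace ℂ H] [CompleteSpace H] (e : HilbertBasis ℕ ℂ H)
    (η : ℂ) (hη : ‖η‖ ≤ 1) (K : ℕ → (H →L[ℂ] H))
    (hK : ∀ (l : ℕ) (ψ : H),
      K l ψ = ∑' n : ℕ,
        (((Real.sqrt ((Nat.choose (n + l) n : ℝ) * (1 - (‖η‖) ^ 2) ^ l) : ℝ) : ℂ)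
            * η ^ n * ⟪e (n + l), ψ⟫_ℂ) • e n) (l : ℕ) :
    (ContinuousLinearMap.adjoint (K l)) (e 0)
      = ((Real.sqrt ((1 - (‖η‖) ^ 2) ^ l) : ℝ) : ℂ) • e l := by
  have hite := orthonormal_iff_ite.mp e.orthonormal
  apply ext_inner_right ℂ
  intro v
  rw [ContinuousLinearMap.adjoint_inner_left, inner_smul_left, Complex.conj_ofReal]
  have hs := ((coeff_summable e η hη l v).hasSum.mapL (innerSL ℂ (e 0)))
  rw [← hK l v] at hs
  have hs' : HasSum (fun n : ℕ =>
      (((Real.sqrt ((Nat.choose (n + l) n : ℝ) * (1 - (‖η‖) ^ 2) ^ l) : ℝ) : ℂ)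
          * η ^ n * ⟪e (n + l), v⟫_ℂ) * ⟪e 0, e n⟫_ℂ) (⟪e 0, (K l) v⟫_ℂ) := by
    simpa [inner_smul_right] using hs
  rw [← hs'.tsum_eq, tsum_eq_single 0 (fun n hn => by
    rw [hite 0 n, if_neg (Ne.symm hn), mul_zero])]
  rw [hite 0 0, if_pos rfl, mul_one]
  simp

/-- For a positive trace-class `ρ` with `Tr ρ = 1` and `|η| ≤ 1`, the attenuator channel
satisfies `1 − ⟨0|Φ_η(ρ)|0⟩ = ∑_l (1 − (1−|η|²)^l) ⟨l|ρ|l⟩ ≤ |η|² Tr(Nρ)`. -/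
theorem attenuator_vacuum_overlap {H : Type*} [NormedAddCommGroup H]
    [InnerProductSpace ℂ H] [CompleteSpace H] (e : HilbertBasis ℕ ℂ H)
    (η : ℂ) (hη : ‖η‖ ≤ 1) (K : ℕ → (H →L[ℂ] H))
    (hK : ∀ (l : ℕ) (ψ : H),
      K l ψ = ∑' n : ℕ,
        (((Real.sqrt ((Nat.choose (n + l) n : ℝ) * (1 - (‖η‖) ^ 2) ^ l) : ℝ) : ℂ)
            * η ^ n * ⟪e (n + l), ψ⟫_ℂ) • e n)
    (ρ : H →L[ℂ] H) (hρ : ρ.IsPositive)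
    (htr : Summable (fun n : ℕ => (⟪e n, ρ (e n)⟫_ℂ).re))
    (htr1 : (∑' n : ℕ, (⟪e n, ρ (e n)⟫_ℂ).re) = 1)
    (Φρ : H →L[ℂ] H)
    (hΦ : ∀ x : H,
      HasSum (fun l : ℕ => K l (ρ ((ContinuousLinearMap.adjoint (K l)) x))) (Φρ x)) :
    1 - (⟪e 0, Φρ (e 0)⟫_ℂ).re
        = ∑' l : ℕ, (1 - (1 - (‖η‖) ^ 2) ^ l) * (⟪e l, ρ (e l)⟫_ℂ).re ∧
    ENNReal.ofReal (1 - (⟪e 0, Φρ (e 0)⟫_ℂ).re)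
        ≤ ENNReal.ofReal ((‖η‖) ^ 2)
            * ∑' n : ℕ, ENNReal.ofReal ((n : ℝ) * (⟪e n, ρ (e n)⟫_ℂ).re) := by
  set t : ℝ := ‖η‖ ^ 2 with ht
  have ht0 : 0 ≤ t := sq_nonneg _
  have ht1 : t ≤ 1 := pow_le_one₀ (norm_nonneg η) hη
  have h1t : (0:ℝ) ≤ 1 - t := by linarith
  set r : ℕ → ℝ := fun l => (⟪e l, ρ (e l)⟫_ℂ).re with hrdef
  have hr : ∀ l, 0 ≤ r l := fun l => by
    exact (Complex.nonneg_iff.mp (hρ.inner_nonneg_right (e l))).1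
  -- term computation
  have hterm : ∀ l : ℕ,
      ⟪e 0, K l (ρ ((ContinuousLinearMap.adjoint (K l)) (e 0)))⟫_ℂ
        = (((1 - t) ^ l : ℝ) : ℂ) * ⟪e l, ρ (e l)⟫_ℂ := by
    intro l
    rw [← ContinuousLinearMap.adjoint_inner_left (K l), adjoint_apply_e0 e η hη K hK l,
      inner_smul_left, map_smul, inner_smul_right, Complex.conj_ofReal]
    rw [← mul_assoc, ← Complex.ofReal_mul, Real.mul_self_sqrt (by positivity)]
  -- HasSum for the overlap
  have hA : HasSum (fun l : ℕ => (1 - t) ^ l * r l) ((⟪e 0, Φρ (e 0)⟫_ℂ).re) := by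
    have h0 := (hΦ (e 0)).mapL (innerSL ℂ (e 0))
    have h1 : HasSum (fun l : ℕ => (((1 - t) ^ l : ℝ) : ℂ) * ⟪e l, ρ (e l)⟫_ℂ)
        (⟪e 0, Φρ (e 0)⟫_ℂ) := by
      simpa [hterm] using h0
    have h2 := h1.mapL Complex.reCLM
    have h3 : ∀ b : ℕ, ((((1 - t) ^ b : ℝ) : ℂ) * ⟪e b, ρ (e b)⟫_ℂ).re
        = (1 - t) ^ b * r b := fun b => Complex.re_ofReal_mul _ _
    simpa only [Complex.reCLM_apply, h3] using h2
  have heq : 1 - (⟪e 0, Φρ (e 0)⟫_ℂ).re = ∑' l : ℕ, (1 - (1 - t) ^ l) * r l := by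
    have hst : ∑' l : ℕ, (1 - (1 - t) ^ l) * r l
        = (∑' l : ℕ, r l) - ∑' l : ℕ, (1 - t) ^ l * r l := by
      rw [← Summable.tsum_sub htr hA.summable]
      exact tsum_congr (fun l => by ring)
    rw [hst, htr1, hA.tsum_eq]
  refine ⟨heq, ?_⟩
  rw [heq]
  have hsum2 : Summable (fun l : ℕ => (1 - (1 - t) ^ l) * r l) :=
    (htr.sub hA.summable).congr (fun l => by ring)
  have hnonneg : ∀ l : ℕ, 0 ≤ (1 - (1 - t) ^ l) * r l := fun l => by
    have := pow_le_one₀ h1t (by linarith : 1 - t ≤ 1) (n := l)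
    nlinarith [hr l]
  rw [ENNReal.ofReal_tsum_of_nonneg hnonneg hsum2]
  calc ∑' l : ℕ, ENNReal.ofReal ((1 - (1 - t) ^ l) * r l)
      ≤ ∑' l : ℕ, ENNReal.ofReal (t * ((l : ℝ) * r l)) := by
        refine ENNReal.tsum_le_tsum (fun l => ENNReal.ofReal_le_ofReal ?_)
        have hb := one_sub_pow_le ht1 l
        nlinarith [hr l]
    _ = ENNReal.ofReal t * ∑' l : ℕ, ENNReal.ofReal ((l : ℝ) * r l) := by
        simp_rw [ENNReal.ofReal_mul ht0]
        exact ENNReal.tsum_mul_left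
end

section
/- Let ρ be a positive trace class operator on a Hilbert space H with Tr ρ = 1, Q a self-adjoint projection with Tr(Qρ) ≥ 1 − ε for some ε ∈ [0,1], and Q⊥ = 1 − Q. Then ‖ρ − QρQ − Q⊥ρQ⊥‖₁ ≤ ‖QρQ⊥‖₁ + ‖Q⊥ρQ‖₁ ≤ 2√ε, where the cross-term bound follows from ‖QρQ⊥‖₁ ≤ √(Tr(QρQ)·Tr(Q⊥ρQ⊥)) ≤ √ε. -/
open scoped InnerProductSpace ENNReal

/-- The trace norm of an operator on a separable Hilbert space, as the supremum over pairs of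
Hilbert bases `(f, g)` of `∑_n |⟨f n, T (g n)⟩|` (valued in `[0,∞]`). -/
noncomputable def traceNorm {H : Type*} [NormedAddCommGroup H] [InnerProductSpace ℂ H]
    [CompleteSpace H] (T : H →L[ℂ] H) : ℝ≥0∞ :=
  ⨆ (f : HilbertBasis ℕ ℂ H) (g : HilbertBasis ℕ ℂ H),
    ∑' n : ℕ, (‖⟪f n, T (g n)⟫_ℂ‖₊ : ℝ≥0∞)

section Aux

open scoped NNReal
open MeasureTheory ContinuousLinearMap

set_option linter.unusedSectionVars false

variable {H : Type*} [NormedAddCommGroup H] [InnerProductSpace ℂ H] [CompleteSpace H]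

lemma parseval_hasSum (b : HilbertBasis ℕ ℂ H) (x : H) :
    HasSum (fun i => ‖⟪b i, x⟫_ℂ‖ ^ 2) (‖x‖ ^ 2) := by
  have h := (b.hasSum_inner_mul_inner x x).mapL Complex.reCLM
  simp only [Complex.reCLM_apply] at h
  convert h using 2 with i
  · rw [← inner_conj_symm x (b i), mul_comm, Complex.mul_conj]
    simp [Complex.normSq_eq_norm_sq]
    rw [← Complex.ofReal_pow, Complex.ofReal_re]
  · rw [← @inner_self_eq_norm_sq ℂ]; rfl

lemma parseval_ennreal (b : HilbertBasis ℕ ℂ H) (x : H) :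
    ∑' i, (‖⟪b i, x⟫_ℂ‖₊ : ℝ≥0∞) ^ 2 = (‖x‖₊ : ℝ≥0∞) ^ 2 := by
  have h := parseval_hasSum b x
  have h2 := ENNReal.ofReal_tsum_of_nonneg (fun i => sq_nonneg ‖⟪b i, x⟫_ℂ‖) h.summable
  rw [h.tsum_eq] at h2
  have hrw : ∀ z : ℂ, ENNReal.ofReal (‖z‖ ^ 2) = (‖z‖₊ : ℝ≥0∞) ^ 2 := fun z => by
    rw [ENNReal.ofReal_pow (norm_nonneg _), ofReal_norm, enorm_eq_nnnorm]
  have hrw2 : ENNReal.ofReal (‖x‖ ^ 2) = (‖x‖₊ : ℝ≥0∞) ^ 2 := by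
    rw [ENNReal.ofReal_pow (norm_nonneg _), ofReal_norm, enorm_eq_nnnorm]
  simp only [hrw] at h2
  rw [← hrw2, h2]

noncomputable def hsSq (T : H →L[ℂ] H) (f : HilbertBasis ℕ ℂ H) : ℝ≥0∞ :=
  ∑' n, (‖T (f n)‖₊ : ℝ≥0∞) ^ 2

lemma hsSq_adjoint (T : H →L[ℂ] H) (f g : HilbertBasis ℕ ℂ H) :
    hsSq T f = hsSq (adjoint T) g := by
  unfold hsSq
  calc ∑' n, (‖T (f n)‖₊ : ℝ≥0∞) ^ 2
      = ∑' n, ∑' m, (‖⟪g m, T (f n)⟫_ℂ‖₊ : ℝ≥0∞) ^ 2 := by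
        exact tsum_congr fun n => (parseval_ennreal g (T (f n))).symm
    _ = ∑' m, ∑' n, (‖⟪f n, adjoint T (g m)⟫_ℂ‖₊ : ℝ≥0∞) ^ 2 := by
        rw [ENNReal.tsum_comm]
        refine tsum_congr fun m => tsum_congr fun n => ?_
        rw [← adjoint_inner_left, ← inner_conj_symm (adjoint T (g m)) (f n)]
        exact congrArg (fun r : ℝ≥0 => ((r : ℝ≥0∞)) ^ 2) (RCLike.nnnorm_conj _)
    _ = ∑' m, (‖adjoint T (g m)‖₊ : ℝ≥0∞) ^ 2 :=
        tsum_congr fun m => parseval_ennreal f _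

open MeasureTheory in
lemma tsum_mul_le_sqrt_mul_sqrt (x y : ℕ → ℝ≥0∞) :
    ∑' n, x n * y n ≤ (∑' n, x n ^ 2) ^ (1/2 : ℝ) * (∑' n, y n ^ 2) ^ (1/2 : ℝ) := by
  have hpq : Real.HolderConjugate 2 2 := Real.HolderConjugate.two_two
  have h := ENNReal.lintegral_mul_le_Lp_mul_Lq (Measure.count (α := ℕ)) hpq
    (f := x) (g := y) (Measurable.aemeasurable (by measurability))
    (Measurable.aemeasurable (by measurability))
  simp only [lintegral_count, Pi.mul_apply,
    show ∀ z : ℝ≥0∞, z ^ (2:ℝ) = z ^ (2:ℕ) from fun z => by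
      rw [show (2:ℝ) = ((2:ℕ):ℝ) by norm_num, ENNReal.rpow_natCast]] at h
  exact h

lemma sq_rpow_half (a : ℝ≥0∞) : (a ^ (2:ℕ)) ^ (1/2 : ℝ) = a := by
  rw [← ENNReal.rpow_natCast a 2]
  rw [← ENNReal.rpow_mul]
  norm_num

lemma tsum_nnnorm_F_lt_top (e : HilbertBasis ℕ ℂ H) (A B : H →L[ℂ] H)
    (hA : hsSq (adjoint A) e ≠ ⊤) (hB : hsSq B e ≠ ⊤) :
    ∑' p : ℕ × ℕ, (‖⟪adjoint A (e p.1), e p.2⟫_ℂ * ⟪e p.2, B (e p.1)⟫_ℂ‖₊ : ℝ≥0∞) ≠ ⊤ := by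
  have key : ∑' p : ℕ × ℕ, (‖⟪adjoint A (e p.1), e p.2⟫_ℂ * ⟪e p.2, B (e p.1)⟫_ℂ‖₊ : ℝ≥0∞)
      ≤ (hsSq (adjoint A) e) ^ (1/2:ℝ) * (hsSq B e) ^ (1/2:ℝ) := by
    calc ∑' p : ℕ × ℕ, (‖⟪adjoint A (e p.1), e p.2⟫_ℂ * ⟪e p.2, B (e p.1)⟫_ℂ‖₊ : ℝ≥0∞)
        = ∑' n, ∑' m, (‖⟪adjoint A (e n), e m⟫_ℂ * ⟪e m, B (e n)⟫_ℂ‖₊ : ℝ≥0∞) :=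
          ENNReal.tsum_prod (f := fun n m => (‖⟪adjoint A (e n), e m⟫_ℂ * ⟪e m, B (e n)⟫_ℂ‖₊ : ℝ≥0∞))
      _ ≤ ∑' n, (‖adjoint A (e n)‖₊ : ℝ≥0∞) * (‖B (e n)‖₊ : ℝ≥0∞) := by
          refine ENNReal.tsum_le_tsum fun n => ?_
          have h1 : ∑' m, (‖⟪adjoint A (e n), e m⟫_ℂ * ⟪e m, B (e n)⟫_ℂ‖₊ : ℝ≥0∞)
              = ∑' m, (‖⟪e m, adjoint A (e n)⟫_ℂ‖₊ : ℝ≥0∞) * (‖⟪e m, B (e n)⟫_ℂ‖₊ : ℝ≥0∞) := by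
            refine tsum_congr fun m => ?_
            rw [nnnorm_mul, ENNReal.coe_mul]
            congr 2
            rw [← inner_conj_symm (adjoint A (e n)) (e m)]
            exact RCLike.nnnorm_conj _
          rw [h1]
          refine le_trans (tsum_mul_le_sqrt_mul_sqrt _ _) ?_
          rw [parseval_ennreal e (adjoint A (e n)), parseval_ennreal e (B (e n)),
            sq_rpow_half, sq_rpow_half]
      _ ≤ (hsSq (adjoint A) e) ^ (1/2:ℝ) * (hsSq B e) ^ (1/2:ℝ) := by
          exact tsum_mul_le_sqrt_mul_sqrt _ _
  intro htop
  rw [htop] at key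
  exact (ENNReal.mul_ne_top (by simp [ENNReal.rpow_ne_top_of_nonneg, hA])
    (by simp [ENNReal.rpow_ne_top_of_nonneg, hB])) (top_le_iff.mp key)

lemma trace_comm (e : HilbertBasis ℕ ℂ H) (A B : H →L[ℂ] H)
    (hA : hsSq (adjoint A) e ≠ ⊤) (hB : hsSq B e ≠ ⊤) :
    ∑' n, ⟪e n, A (B (e n))⟫_ℂ = ∑' m, ⟪e m, B (A (e m))⟫_ℂ := by
  set F : ℕ × ℕ → ℂ := fun p => ⟪adjoint A (e p.1), e p.2⟫_ℂ * ⟪e p.2, B (e p.1)⟫_ℂ with hF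
  have hsumF : Summable F := by
    apply Summable.of_nnnorm
    rw [← ENNReal.tsum_coe_ne_top_iff_summable]
    exact tsum_nnnorm_F_lt_top e A B hA hB
  have h1 : ∑' n, ⟪e n, A (B (e n))⟫_ℂ = ∑' n, ∑' m, F (n, m) := by
    refine tsum_congr fun n => ?_
    rw [show ⟪e n, A (B (e n))⟫_ℂ = ⟪adjoint A (e n), B (e n)⟫_ℂ from
      (adjoint_inner_left A _ _).symm, ← e.tsum_inner_mul_inner (adjoint A (e n)) (B (e n))]
  have h2 : ∑' m, ⟪e m, B (A (e m))⟫_ℂ = ∑' m, ∑' n, F (n, m) := by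
    refine tsum_congr fun m => ?_
    rw [show ⟪e m, B (A (e m))⟫_ℂ = ⟪adjoint B (e m), A (e m)⟫_ℂ from
      (adjoint_inner_left B _ _).symm, ← e.tsum_inner_mul_inner (adjoint B (e m)) (A (e m))]
    refine tsum_congr fun n => ?_
    have hx : ⟪adjoint B (e m), e n⟫_ℂ = ⟪e m, B (e n)⟫_ℂ := adjoint_inner_left B _ _
    have hy : ⟪e n, A (e m)⟫_ℂ = ⟪adjoint A (e n), e m⟫_ℂ := (adjoint_inner_left A _ _).symm
    rw [hx, hy, mul_comm]
  rw [h1, h2]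
  exact (Summable.tsum_comm (f := fun n m => F (n, m)) hsumF).symm

lemma hsSq_basis (T : H →L[ℂ] H) (f g : HilbertBasis ℕ ℂ H) : hsSq T f = hsSq T g :=
  (hsSq_adjoint T f g).trans (hsSq_adjoint T g g).symm

lemma proj_norm_le (P : H →L[ℂ] H) (hPsa : IsSelfAdjoint P) (hPproj : P * P = P) (x : H) :
    ‖P x‖ ≤ ‖x‖ := by
  have hsym := ContinuousLinearMap.isSelfAdjoint_iff_isSymmetric.mp hPsa
  have h1 : ‖P x‖ ^ 2 = RCLike.re ⟪P x, P x⟫_ℂ := (inner_self_eq_norm_sq (𝕜 := ℂ) _).symm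
  have h2 : ⟪P x, P x⟫_ℂ = ⟪x, P x⟫_ℂ := by
    have hPP : P (P x) = P x := by rw [← ContinuousLinearMap.mul_apply, hPproj]
    calc ⟪P x, P x⟫_ℂ = ⟪x, P (P x)⟫_ℂ := hsym x (P x)
      _ = ⟪x, P x⟫_ℂ := by rw [hPP]
  have h3 : RCLike.re ⟪x, P x⟫_ℂ ≤ ‖x‖ * ‖P x‖ :=
    le_trans (RCLike.re_le_norm _) (norm_inner_le_norm x (P x))
  rcases (norm_nonneg (P x)).eq_or_lt' with h | h
  · rw [h]; exact norm_nonneg x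
  · have h4 : ‖P x‖ ^ 2 ≤ ‖x‖ * ‖P x‖ := by rw [h1, h2]; exact h3
    nlinarith

lemma summable_sq_of_ne_top (T : H →L[ℂ] H) (e : HilbertBasis ℕ ℂ H) (h : hsSq T e ≠ ⊤) :
    Summable (fun n => ‖T (e n)‖ ^ 2) := by
  have h' : (∑' n, ((‖T (e n)‖₊ ^ 2 : ℝ≥0) : ℝ≥0∞)) ≠ ⊤ := by
    simpa [hsSq, ENNReal.coe_pow] using h
  have hs := ENNReal.tsum_coe_ne_top_iff_summable.mp h'
  have := NNReal.summable_coe.mpr hs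
  simpa [NNReal.coe_pow, coe_nnnorm] using this

lemma hsSq_eq_ofReal (T : H →L[ℂ] H) (e : HilbertBasis ℕ ℂ H)
    (hsum : Summable (fun n => ‖T (e n)‖ ^ 2)) :
    hsSq T e = ENNReal.ofReal (∑' n, ‖T (e n)‖ ^ 2) := by
  rw [ENNReal.ofReal_tsum_of_nonneg (fun n => sq_nonneg _) hsum]
  exact tsum_congr fun n => by
    rw [ENNReal.ofReal_pow (norm_nonneg _), ofReal_norm, enorm_eq_nnnorm]

lemma traceNorm_add_le (X Y : H →L[ℂ] H) :
    traceNorm (X + Y) ≤ traceNorm X + traceNorm Y := by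
  refine iSup₂_le fun f g => ?_
  calc ∑' n, (‖⟪f n, (X + Y) (g n)⟫_ℂ‖₊ : ℝ≥0∞)
      ≤ ∑' n, ((‖⟪f n, X (g n)⟫_ℂ‖₊ : ℝ≥0∞) + (‖⟪f n, Y (g n)⟫_ℂ‖₊ : ℝ≥0∞)) := by
        refine ENNReal.tsum_le_tsum fun n => ?_
        rw [← ENNReal.coe_add]
        refine ENNReal.coe_le_coe.mpr ?_
        rw [ContinuousLinearMap.add_apply, inner_add_right]
        exact nnnorm_add_le _ _
    _ = (∑' n, (‖⟪f n, X (g n)⟫_ℂ‖₊ : ℝ≥0∞)) + ∑' n, (‖⟪f n, Y (g n)⟫_ℂ‖₊ : ℝ≥0∞) :=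
        ENNReal.tsum_add
    _ ≤ traceNorm X + traceNorm Y := by
        gcongr
        · exact le_iSup₂ (f := fun (f : HilbertBasis ℕ ℂ H) (g : HilbertBasis ℕ ℂ H) =>
            ∑' n, (‖⟪f n, X (g n)⟫_ℂ‖₊ : ℝ≥0∞)) f g
        · exact le_iSup₂ (f := fun (f : HilbertBasis ℕ ℂ H) (g : HilbertBasis ℕ ℂ H) =>
            ∑' n, (‖⟪f n, Y (g n)⟫_ℂ‖₊ : ℝ≥0∞)) f g

lemma traceNorm_factor_le (C D : H →L[ℂ] H) (e : HilbertBasis ℕ ℂ H) :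
    traceNorm (adjoint C * D) ≤ (hsSq C e) ^ (1/2:ℝ) * (hsSq D e) ^ (1/2:ℝ) := by
  refine iSup₂_le fun f g => ?_
  calc ∑' n, (‖⟪f n, (adjoint C * D) (g n)⟫_ℂ‖₊ : ℝ≥0∞)
      = ∑' n, (‖⟪C (f n), D (g n)⟫_ℂ‖₊ : ℝ≥0∞) := by
        refine tsum_congr fun n => ?_
        rw [ContinuousLinearMap.mul_apply, adjoint_inner_right]
    _ ≤ ∑' n, (‖C (f n)‖₊ : ℝ≥0∞) * (‖D (g n)‖₊ : ℝ≥0∞) := by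
        refine ENNReal.tsum_le_tsum fun n => ?_
        rw [← ENNReal.coe_mul]
        exact ENNReal.coe_le_coe.mpr (nnnorm_inner_le_nnnorm (𝕜 := ℂ) _ _)
    _ ≤ (∑' n, (‖C (f n)‖₊ : ℝ≥0∞) ^ 2) ^ (1/2:ℝ) * (∑' n, (‖D (g n)‖₊ : ℝ≥0∞) ^ 2) ^ (1/2:ℝ) :=
        tsum_mul_le_sqrt_mul_sqrt _ _
    _ = (hsSq C e) ^ (1/2:ℝ) * (hsSq D e) ^ (1/2:ℝ) := by
        rw [show (∑' n, (‖C (f n)‖₊ : ℝ≥0∞) ^ 2) = hsSq C f from rfl,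
          show (∑' n, (‖D (g n)‖₊ : ℝ≥0∞) ^ 2) = hsSq D g from rfl,
          hsSq_basis C f e, hsSq_basis D g e]
end Aux

open scoped NNReal
open ContinuousLinearMap

/-- Let `ρ ≥ 0` be trace class with `Tr ρ = 1`, `Q` an orthogonal projection with
`Tr(Qρ) ≥ 1 − ε`, `ε ∈ [0,1]`, and `Q⊥ = 1 − Q`. Then
`‖ρ − QρQ − Q⊥ρQ⊥‖₁ ≤ ‖QρQ⊥‖₁ + ‖Q⊥ρQ‖₁ ≤ 2√ε`. -/
theorem projection_pinching_bound {H : Type*} [NormedAddCommGroup H]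
    [InnerProductSpace ℂ H] [CompleteSpace H] (e : HilbertBasis ℕ ℂ H)
    (ρ : H →L[ℂ] H) (hρ : ρ.IsPositive)
    (htr : Summable (fun n : ℕ => (⟪e n, ρ (e n)⟫_ℂ).re))
    (htr1 : (∑' n : ℕ, (⟪e n, ρ (e n)⟫_ℂ).re) = 1)
    (Q : H →L[ℂ] H) (hQsa : IsSelfAdjoint Q) (hQproj : Q * Q = Q)
    (ε : ℝ) (hε0 : 0 ≤ ε) (hε1 : ε ≤ 1)
    (htrQ : Summable (fun n : ℕ => (⟪e n, Q (ρ (e n))⟫_ℂ).re))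
    (hQρ : 1 - ε ≤ ∑' n : ℕ, (⟪e n, Q (ρ (e n))⟫_ℂ).re) :
    traceNorm (ρ - Q * ρ * Q - (1 - Q) * ρ * (1 - Q))
        ≤ traceNorm (Q * ρ * (1 - Q)) + traceNorm ((1 - Q) * ρ * Q) ∧
    traceNorm (Q * ρ * (1 - Q)) + traceNorm ((1 - Q) * ρ * Q)
        ≤ ENNReal.ofReal (2 * Real.sqrt ε) := by
  have h0 : 0 ≤ ρ := (ContinuousLinearMap.nonneg_iff_isPositive ρ).mpr hρ
  set S : H →L[ℂ] H := CFC.sqrt ρ with hSdef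
  have hSsa : IsSelfAdjoint S := IsSelfAdjoint.of_nonneg (CFC.sqrt_nonneg ρ)
  have hSS : S * S = ρ := CFC.sqrt_mul_sqrt_self ρ h0
  have hSsym := ContinuousLinearMap.isSelfAdjoint_iff_isSymmetric.mp hSsa
  have hQsym := ContinuousLinearMap.isSelfAdjoint_iff_isSymmetric.mp hQsa
  set P : H →L[ℂ] H := 1 - Q with hPdef
  have hPsa : IsSelfAdjoint P := (IsSelfAdjoint.one (H →L[ℂ] H)).sub hQsa
  have hPproj : P * P = P := by
    rw [hPdef, sub_mul, one_mul, mul_sub, mul_one, hQproj]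
    abel
  have hQnorm := proj_norm_le Q hQsa hQproj
  have hPnorm := proj_norm_le P hPsa hPproj
  -- inner products via S
  have hinnerρ : ∀ x y : H, ⟪x, ρ y⟫_ℂ = ⟪S x, S y⟫_ℂ := fun x y => by
    rw [← hSS, ContinuousLinearMap.mul_apply]
    exact (hSsym x (S y)).symm
  have ht_eq : ∀ n, (⟪e n, ρ (e n)⟫_ℂ).re = ‖S (e n)‖ ^ 2 := fun n => by
    rw [hinnerρ]
    exact inner_self_eq_norm_sq (𝕜 := ℂ) _
  have hS_sq_summable : Summable (fun n => ‖S (e n)‖ ^ 2) := htr.congr ht_eq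
  have hsSqS : hsSq S e = 1 := by
    rw [hsSq_eq_ofReal S e hS_sq_summable, tsum_congr (fun n => (ht_eq n).symm), htr1,
      ENNReal.ofReal_one]
  -- adjoints
  have hadj_SQ : adjoint (S * Q) = Q * S := by
    rw [← ContinuousLinearMap.star_eq_adjoint, star_mul, hQsa.star_eq, hSsa.star_eq]
  have hadj_SP : adjoint (S * P) = P * S := by
    rw [← ContinuousLinearMap.star_eq_adjoint, star_mul, hPsa.star_eq, hSsa.star_eq]
  have hadj_QS : adjoint (Q * S) = S * Q := by
    rw [← ContinuousLinearMap.star_eq_adjoint, star_mul, hQsa.star_eq, hSsa.star_eq]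
  have hadj_PS : adjoint (P * S) = S * P := by
    rw [← ContinuousLinearMap.star_eq_adjoint, star_mul, hPsa.star_eq, hSsa.star_eq]
  -- a and b : squared HS norms
  have ha1 : hsSq (S * Q) e ≤ 1 := by
    rw [hsSq_adjoint (S * Q) e e, hadj_SQ, ← hsSqS]
    refine ENNReal.tsum_le_tsum fun n => ?_
    have h : ‖(Q * S) (e n)‖₊ ≤ ‖S (e n)‖₊ := hQnorm _
    exact pow_le_pow_left' (ENNReal.coe_le_coe.mpr h) 2
  have hb1 : hsSq (S * P) e ≤ 1 := by
    rw [hsSq_adjoint (S * P) e e, hadj_SP, ← hsSqS]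
    refine ENNReal.tsum_le_tsum fun n => ?_
    have h : ‖(P * S) (e n)‖₊ ≤ ‖S (e n)‖₊ := hPnorm _
    exact pow_le_pow_left' (ENNReal.coe_le_coe.mpr h) 2
  have ha_ne : hsSq (S * Q) e ≠ ⊤ := fun h => by simp [h] at ha1
  have hb_ne : hsSq (S * P) e ≠ ⊤ := fun h => by simp [h] at hb1
  have hα_summable : Summable (fun n => ‖(S * Q) (e n)‖ ^ 2) := summable_sq_of_ne_top _ e ha_ne
  have hβ_summable : Summable (fun n => ‖(S * P) (e n)‖ ^ 2) := summable_sq_of_ne_top _ e hb_ne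
  -- the cross term sequence
  set z : ℕ → ℂ := fun n => ⟪(S * Q) (e n), (S * P) (e n)⟫_ℂ with hzdef
  have hz_eq : ∀ n, z n = ⟪e n, ((Q * S) * (S * P)) (e n)⟫_ℂ := fun n => by
    have h1 : ⟪S (Q (e n)), S (P (e n))⟫_ℂ = ⟪Q (e n), S (S (P (e n)))⟫_ℂ := hSsym _ _
    have h2 : ⟪Q (e n), S (S (P (e n)))⟫_ℂ = ⟪e n, Q (S (S (P (e n))))⟫_ℂ := hQsym _ _
    calc z n = ⟪S (Q (e n)), S (P (e n))⟫_ℂ := rfl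
      _ = ⟪e n, Q (S (S (P (e n))))⟫_ℂ := h1.trans h2
      _ = ⟪e n, ((Q * S) * (S * P)) (e n)⟫_ℂ := rfl
  have hz_summable : Summable z := by
    refine Summable.of_norm (Summable.of_nonneg_of_le (fun n => norm_nonneg _) (fun n => ?_)
      ((hα_summable.add hβ_summable).div_const 2))
    calc ‖z n‖ ≤ ‖(S * Q) (e n)‖ * ‖(S * P) (e n)‖ := norm_inner_le_norm _ _
      _ ≤ (‖(S * Q) (e n)‖ ^ 2 + ‖(S * P) (e n)‖ ^ 2) / 2 := by
          nlinarith [sq_nonneg (‖(S * Q) (e n)‖ - ‖(S * P) (e n)‖)]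
  have hPQ : ∀ x : H, P (Q x) = 0 := fun x => by
    have h : (P * Q) = 0 := by rw [hPdef, sub_mul, one_mul, hQproj, sub_self]
    calc P (Q x) = (P * Q) x := rfl
      _ = 0 := by rw [h]; rfl
  have hz_tsum : ∑' n, z n = 0 := by
    have hcomm := trace_comm e (Q * S) (S * P) (by rw [hadj_QS]; exact ha_ne) hb_ne
    calc ∑' n, z n = ∑' n, ⟪e n, (Q * S) ((S * P) (e n))⟫_ℂ := by
          exact tsum_congr fun n => hz_eq n
      _ = ∑' m, ⟪e m, (S * P) ((Q * S) (e m))⟫_ℂ := hcomm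
      _ = 0 := by
          have hterm : ∀ m : ℕ, ⟪e m, (S * P) ((Q * S) (e m))⟫_ℂ = 0 := fun m => by
            have h : (S * P) ((Q * S) (e m)) = S (P (Q (S (e m)))) := rfl
            rw [h, hPQ, map_zero, inner_zero_right]
          rw [tsum_congr hterm, tsum_zero]
  have hγ : HasSum (fun n => (z n).re) 0 := by
    have h := hz_summable.hasSum.mapL Complex.reCLM
    rw [hz_tsum] at h
    simpa using h
  -- splitting S x
  have hsplit : ∀ x : H, S x = (S * Q) x + (S * P) x := fun x => by
    simp only [ContinuousLinearMap.mul_apply, hPdef, ContinuousLinearMap.sub_apply,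
      ContinuousLinearMap.one_apply]
    rw [← map_add]
    congr 1
    abel
  -- difference identity
  have hdiff_eq : ∀ n, (⟪e n, ρ (e n)⟫_ℂ).re - (⟪e n, Q (ρ (e n))⟫_ℂ).re
      = ‖(S * P) (e n)‖ ^ 2 + (z n).re := fun n => by
    have hq : ⟪e n, Q (ρ (e n))⟫_ℂ = ⟪Q (e n), ρ (e n)⟫_ℂ := (hQsym _ _).symm
    have key : ⟪e n, ρ (e n)⟫_ℂ - ⟪e n, Q (ρ (e n))⟫_ℂ
        = ⟪(S * P) (e n), (S * Q) (e n)⟫_ℂ + ⟪(S * P) (e n), (S * P) (e n)⟫_ℂ := by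
      calc ⟪e n, ρ (e n)⟫_ℂ - ⟪e n, Q (ρ (e n))⟫_ℂ
          = ⟪e n, ρ (e n)⟫_ℂ - ⟪Q (e n), ρ (e n)⟫_ℂ := by rw [hq]
        _ = ⟪e n - Q (e n), ρ (e n)⟫_ℂ := (inner_sub_left _ _ _).symm
        _ = ⟪P (e n), ρ (e n)⟫_ℂ := by
            have h : P (e n) = e n - Q (e n) := by simp [hPdef]
            rw [h]
        _ = ⟪S (P (e n)), S (e n)⟫_ℂ := hinnerρ _ _
        _ = ⟪(S * P) (e n), (S * Q) (e n) + (S * P) (e n)⟫_ℂ := by rw [hsplit (e n)]; rfl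
        _ = ⟪(S * P) (e n), (S * Q) (e n)⟫_ℂ + ⟪(S * P) (e n), (S * P) (e n)⟫_ℂ :=
            inner_add_right _ _ _
    have hre := congrArg Complex.re key
    rw [Complex.sub_re, Complex.add_re] at hre
    rw [hre]
    have h1 : (⟪(S * P) (e n), (S * Q) (e n)⟫_ℂ).re = (z n).re := inner_re_symm (𝕜 := ℂ) _ _
    have h2 : (⟪(S * P) (e n), (S * P) (e n)⟫_ℂ).re = ‖(S * P) (e n)‖ ^ 2 :=
      inner_self_eq_norm_sq (𝕜 := ℂ) _
    rw [h1, h2]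
    ring
  -- sum of β is at most ε
  have hβ_tsum_le : ∑' n, ‖(S * P) (e n)‖ ^ 2 ≤ ε := by
    have hdsum : Summable (fun n => (⟪e n, ρ (e n)⟫_ℂ).re - (⟪e n, Q (ρ (e n))⟫_ℂ).re) :=
      htr.sub htrQ
    have hts : ∑' n, ((⟪e n, ρ (e n)⟫_ℂ).re - (⟪e n, Q (ρ (e n))⟫_ℂ).re)
        = 1 - ∑' n, (⟪e n, Q (ρ (e n))⟫_ℂ).re := by
      rw [Summable.tsum_sub htr htrQ, htr1]
    have hts2 : ∑' n, (‖(S * P) (e n)‖ ^ 2 + (z n).re)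
        = 1 - ∑' n, (⟪e n, Q (ρ (e n))⟫_ℂ).re := by
      rw [← hts]
      exact tsum_congr fun n => (hdiff_eq n).symm
    have hβval : ∑' n, ‖(S * P) (e n)‖ ^ 2
        = 1 - ∑' n, (⟪e n, Q (ρ (e n))⟫_ℂ).re := by
      have := Summable.tsum_add hβ_summable hγ.summable
      rw [hγ.tsum_eq, add_zero] at this
      rw [← this, hts2]
    rw [hβval]
    linarith
  -- traceNorm bounds for the two cross terms
  have hcross1 : Q * ρ * P = adjoint (S * Q) * (S * P) := by
    rw [hadj_SQ, ← hSS]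
    noncomm_ring
  have hcross2 : P * ρ * Q = adjoint (S * P) * (S * Q) := by
    rw [hadj_SP, ← hSS]
    noncomm_ring
  have hbε : hsSq (S * P) e ≤ ENNReal.ofReal ε := by
    rw [hsSq_eq_ofReal (S * P) e hβ_summable]
    exact ENNReal.ofReal_le_ofReal hβ_tsum_le
  have hsqrt : ENNReal.ofReal ε ^ (1/2 : ℝ) = ENNReal.ofReal (Real.sqrt ε) := by
    rw [ENNReal.ofReal_rpow_of_nonneg hε0 (by norm_num), Real.sqrt_eq_rpow]
  have hbound : ∀ X Y : H →L[ℂ] H, hsSq X e ≤ 1 → hsSq Y e ≤ ENNReal.ofReal ε →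
      traceNorm (adjoint X * Y) ≤ ENNReal.ofReal (Real.sqrt ε) := fun X Y hX hY => by
    refine le_trans (traceNorm_factor_le X Y e) ?_
    calc hsSq X e ^ (1/2:ℝ) * hsSq Y e ^ (1/2:ℝ)
        ≤ (1:ℝ≥0∞) ^ (1/2:ℝ) * (ENNReal.ofReal ε) ^ (1/2:ℝ) := by
          gcongr <;> norm_num
      _ = ENNReal.ofReal (Real.sqrt ε) := by rw [ENNReal.one_rpow, one_mul, hsqrt]
  have hTN1 : traceNorm (Q * ρ * P) ≤ ENNReal.ofReal (Real.sqrt ε) := by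
    rw [hcross1]
    exact hbound _ _ ha1 hbε
  have hTN2 : traceNorm (P * ρ * Q) ≤ ENNReal.ofReal (Real.sqrt ε) := by
    have : traceNorm (adjoint (S * P) * (S * Q)) ≤ hsSq (S * P) e ^ (1/2:ℝ) * hsSq (S * Q) e ^ (1/2:ℝ) :=
      traceNorm_factor_le _ _ e
    rw [hcross2]
    refine le_trans this ?_
    calc hsSq (S * P) e ^ (1/2:ℝ) * hsSq (S * Q) e ^ (1/2:ℝ)
        ≤ (ENNReal.ofReal ε) ^ (1/2:ℝ) * (1:ℝ≥0∞) ^ (1/2:ℝ) := by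
          gcongr <;> norm_num
      _ = ENNReal.ofReal (Real.sqrt ε) := by rw [ENNReal.one_rpow, mul_one, hsqrt]
  constructor
  · have hdecomp : ρ - Q * ρ * Q - P * ρ * P = Q * ρ * P + P * ρ * Q := by
      rw [hPdef]
      noncomm_ring
    rw [hdecomp]
    exact traceNorm_add_le _ _
  · calc traceNorm (Q * ρ * P) + traceNorm (P * ρ * Q)
        ≤ ENNReal.ofReal (Real.sqrt ε) + ENNReal.ofReal (Real.sqrt ε) :=
          add_le_add hTN1 hTN2
      _ = ENNReal.ofReal (2 * Real.sqrt ε) := by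
          rw [← ENNReal.ofReal_add (Real.sqrt_nonneg _) (Real.sqrt_nonneg _)]
          norm_num [two_mul]
end

section
/- Let X be a Banach space, M ∈ B(X) a contraction with M^n x → P x for all x (P ∈ B(X)), and L ∈ B(X) with C := sup over the relevant family of norms of L finite. Then for every k ≥ 1 and x ∈ X, (1/n^k) ∑_{i ∈ Δ_disc^k(n)} M^{i_{k+1}} L M^{i_k} L ⋯ M^{i_2} L M^{i_1} x converges to ((PLP)^k / k!) x as n → ∞, where i_{k+1} := n − k − ∑_{l=1}^k i_l. -/
open Filter Finset

variable {X : Type*} [NormedAddCommGroup X] [NormedSpace ℂ X] [CompleteSpace X]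

noncomputable def zenoRest (M L : X →L[ℂ] X) : (k : ℕ) → (Fin k → ℕ) → (X →L[ℂ] X)
  | 0, _ => 1
  | (k + 1), i => (L * M ^ (i (Fin.last k))) * zenoRest M L k (fun l => i l.castSucc)

namespace ZenoAux

variable (M L : X →L[ℂ] X)

lemma pow_norm_le (hM : ‖M‖ ≤ 1) (a : ℕ) : ‖M ^ a‖ ≤ 1 := by
  induction a with
  | zero => simpa using (show ‖(1 : X →L[ℂ] X)‖ ≤ 1 from ContinuousLinearMap.norm_id_le)
  | succ a ih =>
    calc ‖M ^ (a+1)‖ ≤ ‖M ^ a‖ * ‖M‖ := by rw [pow_succ]; exact norm_mul_le _ _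
    _ ≤ 1 := by nlinarith [norm_nonneg (M ^ a)]

lemma zenoRest_norm_le (hM : ‖M‖ ≤ 1) (k : ℕ) (i : Fin k → ℕ) :
    ‖zenoRest M L k i‖ ≤ ‖L‖ ^ k := by
  induction k with
  | zero => simpa [zenoRest] using (show ‖(1 : X →L[ℂ] X)‖ ≤ 1 from ContinuousLinearMap.norm_id_le)
  | succ k ih =>
    calc ‖zenoRest M L (k+1) i‖
        ≤ ‖L * M ^ (i (Fin.last k))‖ * ‖zenoRest M L k (fun l => i l.castSucc)‖ :=
          norm_mul_le _ _
      _ ≤ (‖L‖ * 1) * ‖L‖ ^ k := by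
          apply mul_le_mul _ (ih _) (norm_nonneg _) (by positivity)
          exact le_trans (norm_mul_le _ _)
            (mul_le_mul_of_nonneg_left (pow_norm_le M hM _) (norm_nonneg _))
      _ = ‖L‖ ^ (k+1) := by ring

lemma zenoRest_succ' (k : ℕ) (i : Fin (k+1) → ℕ) :
    zenoRest M L (k+1) i = zenoRest M L k (fun l => i l.succ) * (L * M ^ (i 0)) := by
  induction k with
  | zero =>
    show (L * M ^ (i (Fin.last 0))) * 1 = 1 * (L * M ^ (i 0))
    rw [mul_one, one_mul]; rfl
  | succ k ih =>
    show (L * M ^ (i (Fin.last (k+1)))) * zenoRest M L (k+1) (fun l => i l.castSucc) = _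
    rw [ih (fun l => i l.castSucc)]
    show (L * M ^ (i (Fin.last (k+1)))) *
        (zenoRest M L k (fun l => i l.succ.castSucc) * (L * M ^ (i ((0:Fin (k+1)).castSucc)))) = _
    show _ = (L * M ^ (i (Fin.last k).succ)) * zenoRest M L k (fun l => i l.castSucc.succ)
        * (L * M ^ (i 0))
    have h1 : (Fin.last k).succ = Fin.last (k+1) := Fin.succ_last k
    have h2 : ∀ l : Fin k, l.castSucc.succ = l.succ.castSucc := fun l => Fin.succ_castSucc l
    have h3 : ((0:Fin (k+1)).castSucc) = 0 := rfl
    simp only [h1, h2, h3, mul_assoc]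

set_option linter.unusedSectionVars false

/-- The simplex-sum operator. -/
noncomputable def zenoT (k n : ℕ) : X →L[ℂ] X :=
  ∑ i ∈ Finset.filter (fun i : Fin k → ℕ => ∑ l, i l ≤ n - k)
      (Fintype.piFinset fun _ : Fin k => Finset.range (n + 1)),
    M ^ (n - k - ∑ l, i l) * zenoRest M L k i

lemma zenoT_norm_le (hM : ‖M‖ ≤ 1) (k n : ℕ) :
    ‖zenoT M L k n‖ ≤ (n+1)^k * ‖L‖ ^ k := by
  set S := Finset.filter (fun i : Fin k → ℕ => ∑ l, i l ≤ n - k)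
      (Fintype.piFinset fun _ : Fin k => Finset.range (n + 1)) with hS
  have hcard : S.card ≤ (n+1)^k := by
    refine le_trans (Finset.card_filter_le _ _) ?_
    rw [Fintype.card_piFinset]
    simp
  have hterm : ∀ i ∈ S, ‖M ^ (n - k - ∑ l, i l) * zenoRest M L k i‖ ≤ ‖L‖ ^ k := by
    intro i _
    refine le_trans (norm_mul_le _ _) ?_
    have h1 := zenoRest_norm_le M L hM k i
    have h2 := pow_norm_le M hM (n - k - ∑ l, i l)
    nlinarith [norm_nonneg (zenoRest M L k i), pow_nonneg (norm_nonneg L) k,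
      norm_nonneg (M ^ (n - k - ∑ l, i l))]
  calc ‖zenoT M L k n‖ ≤ ∑ i ∈ S, ‖M ^ (n - k - ∑ l, i l) * zenoRest M L k i‖ :=
        norm_sum_le _ _
    _ ≤ S.card • ‖L‖ ^ k := Finset.sum_le_card_nsmul _ _ _ hterm
    _ ≤ (n+1)^k * ‖L‖ ^ k := by
        rw [nsmul_eq_mul]
        have : ((n:ℝ)+1)^k = (((n+1)^k : ℕ) : ℝ) := by push_cast; ring
        rw [this]
        exact mul_le_mul_of_nonneg_right (by exact_mod_cast hcard) (by positivity)

lemma filter_range_eq (k m n : ℕ) (hmn : m ≤ n) :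
    Finset.filter (fun i : Fin k → ℕ => ∑ l, i l ≤ m - k)
      (Fintype.piFinset fun _ : Fin k => Finset.range (n + 1)) =
    Finset.filter (fun i : Fin k → ℕ => ∑ l, i l ≤ m - k)
      (Fintype.piFinset fun _ : Fin k => Finset.range (m + 1)) := by
  ext i
  simp only [Finset.mem_filter, Fintype.mem_piFinset, Finset.mem_range, Nat.lt_succ_iff]
  constructor
  · rintro ⟨-, h2⟩
    refine ⟨fun l => ?_, h2⟩
    have : i l ≤ ∑ l', i l' := Finset.single_le_sum (fun _ _ => Nat.zero_le _) (mem_univ l)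
    omega
  · rintro ⟨h1, h2⟩
    exact ⟨fun l => le_trans (h1 l) hmn, h2⟩

lemma piFinset_succ_eq (k n : ℕ) :
    (Fintype.piFinset fun _ : Fin (k+1) => Finset.range (n + 1)) =
      ((Finset.range (n+1)) ×ˢ Fintype.piFinset fun _ : Fin k => Finset.range (n + 1)).map
        (Fin.consEquiv fun _ => ℕ).toEmbedding := by
  ext i
  simp only [Finset.mem_map, Finset.mem_product, Fintype.mem_piFinset, Finset.mem_range,
    Equiv.coe_toEmbedding, Fin.consEquiv_apply]
  constructor
  · intro h
    exact ⟨(i 0, fun l => i l.succ), ⟨h 0, fun l => h l.succ⟩, Fin.cons_self_tail i⟩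
  · rintro ⟨⟨j, i'⟩, ⟨hj, hi'⟩, rfl⟩
    intro l
    refine Fin.cases ?_ ?_ l
    · simpa using hj
    · intro l'; simpa using hi' l'

lemma zenoT_succ (k n : ℕ) (hn : k + 1 ≤ n) :
    zenoT M L (k+1) n = ∑ j ∈ Finset.range (n - k), zenoT M L k (n - 1 - j) * (L * M ^ j) := by
  rw [zenoT, Finset.sum_filter, piFinset_succ_eq, Finset.sum_map, Finset.sum_product]
  have hcons : ∀ (j : ℕ) (i' : Fin k → ℕ),
      ((Fin.consEquiv fun _ => ℕ) (j, i') : Fin (k+1) → ℕ) = Fin.cons j i' := fun _ _ => rfl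
  simp only [Equiv.coe_toEmbedding, hcons]
  have hterm : ∀ j ∈ Finset.range (n+1), ∀ i' : Fin k → ℕ,
      (if ∑ l, (Fin.cons j i' : Fin (k+1) → ℕ) l ≤ n - (k+1) then
        M ^ (n - (k+1) - ∑ l, (Fin.cons j i' : Fin (k+1) → ℕ) l) *
          zenoRest M L (k+1) (Fin.cons j i') else 0)
      = (if j + ∑ l, i' l ≤ n - (k+1) then
          (M ^ ((n-1-j) - k - ∑ l, i' l) * zenoRest M L k i') * (L * M ^ j) else 0) := by
    intro j _ i'
    have hsum : ∑ l, (Fin.cons j i' : Fin (k+1) → ℕ) l = j + ∑ l, i' l := by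
      simp [Fin.sum_cons]
    have hrest : zenoRest M L (k+1) (Fin.cons j i') = zenoRest M L k i' * (L * M ^ j) := by
      have h1 : (fun l : Fin k => (Fin.cons j i' : Fin (k+1) → ℕ) l.succ) = i' :=
        funext fun l => by simp
      rw [zenoRest_succ', h1, Fin.cons_zero]
    rw [hsum, hrest]
    by_cases hc : j + ∑ l, i' l ≤ n - (k+1)
    · rw [if_pos hc, if_pos hc]
      have he : n - (k+1) - (j + ∑ l, i' l) = (n-1-j) - k - ∑ l, i' l := by omega
      rw [he, mul_assoc]
    · rw [if_neg hc, if_neg hc]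
  rw [Finset.sum_congr rfl fun j hj => Finset.sum_congr rfl fun i' _ => hterm j hj i']
  rw [← Finset.sum_subset (Finset.range_subset_range.2 (by omega : n - k ≤ n + 1))
    (fun j _ hj => ?_)]
  swap
  · refine Finset.sum_eq_zero fun i' _ => ?_
    rw [if_neg (by simp only [Finset.mem_range] at hj; omega)]
  refine Finset.sum_congr rfl fun j hj => ?_
  simp only [Finset.mem_range] at hj
  have hiff : ∀ i' : Fin k → ℕ, (j + ∑ l, i' l ≤ n - (k+1)) ↔ (∑ l, i' l ≤ (n-1-j) - k) := by
    intro i'; omega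
  calc (∑ i' ∈ Fintype.piFinset fun _ : Fin k => Finset.range (n + 1),
        if j + ∑ l, i' l ≤ n - (k+1) then
          (M ^ ((n-1-j) - k - ∑ l, i' l) * zenoRest M L k i') * (L * M ^ j) else 0)
      = ∑ i' ∈ Finset.filter (fun i' : Fin k → ℕ => ∑ l, i' l ≤ (n-1-j) - k)
          (Fintype.piFinset fun _ : Fin k => Finset.range (n + 1)),
          (M ^ ((n-1-j) - k - ∑ l, i' l) * zenoRest M L k i') * (L * M ^ j) := by
        rw [Finset.sum_filter]
        exact Finset.sum_congr rfl fun i' _ => by simp only [hiff i']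
    _ = zenoT M L k (n - 1 - j) * (L * M ^ j) := by
        rw [filter_range_eq k (n-1-j) n (by omega), zenoT, Finset.sum_mul]

lemma nat_pow_succ_le (m k : ℕ) : (m+1)^(k+1) ≤ m^(k+1) + (k+1)*(m+1)^k := by
  induction k with
  | zero => simp
  | succ k ih =>
    have h2 : m^(k+1) ≤ (m+1)^(k+1) := Nat.pow_le_pow_left (by omega) _
    calc (m+1)^(k+2) = (m+1)^(k+1)*(m+1) := by ring
      _ ≤ (m^(k+1) + (k+1)*(m+1)^k)*(m+1) := Nat.mul_le_mul_right _ ih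
      _ = m^(k+2) + m^(k+1) + (k+1)*(m+1)^(k+1) := by ring
      _ ≤ m^(k+2) + (m+1)^(k+1) + (k+1)*(m+1)^(k+1) := by
          exact Nat.add_le_add_right (Nat.add_le_add_left h2 _) _
      _ = m^(k+2) + (k+2)*(m+1)^(k+1) := by ring

lemma nat_pow_succ_ge (m k : ℕ) : m^(k+1) + (k+1)*m^k ≤ (m+1)^(k+1) := by
  induction k with
  | zero => simp
  | succ k ih =>
    calc m^(k+2) + (k+2)*m^(k+1) ≤ m^(k+2) + (k+2)*m^(k+1) + (k+1)*m^k := Nat.le_add_right _ _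
      _ = (m^(k+1) + (k+1)*m^k)*(m+1) := by ring
      _ ≤ (m+1)^(k+1)*(m+1) := Nat.mul_le_mul_right _ ih
      _ = (m+1)^(k+2) := by ring

lemma nat_sum_pow_upper (k n : ℕ) : (k+1) * ∑ m ∈ Finset.range n, m^k ≤ n^(k+1) := by
  induction n with
  | zero => simp
  | succ n ih =>
    rw [Finset.sum_range_succ, Nat.mul_add]
    have := nat_pow_succ_ge n k
    omega

lemma nat_sum_pow_lower (k n : ℕ) :
    n^(k+1) ≤ (k+1) * ∑ m ∈ Finset.range n, m^k + (k+1) * n^k := by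
  induction n with
  | zero => simp
  | succ n ih =>
    rw [Finset.sum_range_succ, Nat.mul_add]
    have := nat_pow_succ_le n k
    have h2 : n^k ≤ (n+1)^k := Nat.pow_le_pow_left (by omega) _
    omega

lemma tendsto_sum_pow_div (k : ℕ) :
    Tendsto (fun n : ℕ => (((n:ℝ))^(k+1))⁻¹ * ∑ m ∈ Finset.range n, ((m:ℝ))^k)
      atTop (nhds (((k:ℝ)+1)⁻¹)) := by
  have hbound : ∀ n : ℕ, 1 ≤ n →
      |(((n:ℝ))^(k+1))⁻¹ * (∑ m ∈ Finset.range n, ((m:ℝ))^k) - ((k:ℝ)+1)⁻¹| ≤ (n:ℝ)⁻¹ := by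
    intro n hn
    have hn0 : (0:ℝ) < n := by exact_mod_cast hn
    have hb : (0:ℝ) < (n:ℝ)^(k+1) := by positivity
    have hk1 : (0:ℝ) < (k:ℝ)+1 := by positivity
    have h1 : ((k:ℝ)+1) * (∑ m ∈ Finset.range n, ((m:ℝ))^k) ≤ (n:ℝ)^(k+1) := by
      have h := (Nat.cast_le (α := ℝ)).2 (nat_sum_pow_upper k n)
      push_cast at h
      linarith
    have h2 : (n:ℝ)^(k+1) ≤ ((k:ℝ)+1) * (∑ m ∈ Finset.range n, ((m:ℝ))^k)
        + ((k:ℝ)+1) * (n:ℝ)^k := by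
      have h := (Nat.cast_le (α := ℝ)).2 (nat_sum_pow_lower k n)
      push_cast at h
      linarith
    set s : ℝ := ∑ m ∈ Finset.range n, ((m:ℝ))^k
    have key : |((k:ℝ)+1) * s - (n:ℝ)^(k+1)| ≤ ((k:ℝ)+1) * (n:ℝ)^k := by
      rw [abs_le]; constructor <;> linarith
    have hid : ((n:ℝ)^(k+1))⁻¹ * s - ((k:ℝ)+1)⁻¹
        = (((k:ℝ)+1) * s - (n:ℝ)^(k+1)) / (((k:ℝ)+1) * (n:ℝ)^(k+1)) := by
      field_simp
    rw [hid, abs_div, abs_of_pos (by positivity : (0:ℝ) < ((k:ℝ)+1) * (n:ℝ)^(k+1))]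
    rw [div_le_iff₀ (by positivity)]
    calc |((k:ℝ)+1) * s - (n:ℝ)^(k+1)| ≤ ((k:ℝ)+1) * (n:ℝ)^k := key
      _ = (n:ℝ)⁻¹ * (((k:ℝ)+1) * (n:ℝ)^(k+1)) := by
          field_simp
          ring
  have h0 : Tendsto (fun n : ℕ => (n:ℝ)⁻¹) atTop (nhds 0) :=
    tendsto_inv_atTop_zero.comp tendsto_natCast_atTop_atTop
  rw [← tendsto_sub_nhds_zero_iff]
  apply squeeze_zero_norm' _ h0
  filter_upwards [Filter.eventually_atTop.2 ⟨1, fun n hn => hbound n hn⟩] with n h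
  simpa using h

lemma cesaro_pow {E : Type*} [NormedAddCommGroup E] [NormedSpace ℝ E]
    (k : ℕ) {v : ℕ → E} {l : E}
    (hv : Tendsto (fun m : ℕ => (((m:ℝ))^k)⁻¹ • v m) atTop (nhds l)) :
    Tendsto (fun n : ℕ => (((n:ℝ))^(k+1))⁻¹ • ∑ m ∈ Finset.range n, v m)
      atTop (nhds (((k:ℝ)+1)⁻¹ • l)) := by
  set w : ℕ → E := fun m => v m - ((m:ℝ)^k) • l with hw
  set g : ℕ → ℝ := fun m => (m:ℝ)^k with hg
  -- sum of g tends to atTop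
  have hsg : Tendsto (fun n : ℕ => ∑ m ∈ Finset.range n, g m) atTop atTop := by
    have h1 : Tendsto (fun n : ℕ => (((n:ℝ))^(k+1))⁻¹ * ∑ m ∈ Finset.range n, g m)
        atTop (nhds (((k:ℝ)+1)⁻¹)) := tendsto_sum_pow_div k
    have h2 : Tendsto (fun n : ℕ => ((n:ℝ))^(k+1)) atTop atTop :=
      (tendsto_pow_atTop (by omega)).comp tendsto_natCast_atTop_atTop
    have h3 := Filter.Tendsto.pos_mul_atTop (by positivity) h1 h2
    refine h3.congr' ?_
    filter_upwards [Filter.eventually_ge_atTop 1] with n hn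
    have : ((n:ℝ))^(k+1) ≠ 0 := by positivity
    field_simp
  -- w is little-o of g
  have hwo : w =o[atTop] g := by
    have hsmall : Tendsto (fun m : ℕ => (((m:ℝ))^k)⁻¹ • v m - l) atTop (nhds 0) :=
      tendsto_sub_nhds_zero_iff.2 hv
    have h4 := (Asymptotics.isBigO_refl g atTop).smul_isLittleO
      ((Asymptotics.isLittleO_one_iff ℝ).2 hsmall)
    refine h4.congr' ?_ ?_
    · filter_upwards [Filter.eventually_ge_atTop 1] with m hm
      have hm0 : ((m:ℝ))^k ≠ 0 := by positivity
      simp only [hw, hg, smul_sub, smul_smul, mul_inv_cancel₀ hm0, one_smul]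
    · filter_upwards with m
      simp [hg]
  have hsum := hwo.sum_range (fun m => by positivity) hsg
  -- sums of w are little-o of n^(k+1)
  have hgO : (fun n : ℕ => ∑ m ∈ Finset.range n, g m) =O[atTop]
      (fun n : ℕ => ((n:ℝ))^(k+1)) := by
    apply Asymptotics.isBigO_of_le
    intro n
    have h1 : ((k:ℝ)+1) * (∑ m ∈ Finset.range n, g m) ≤ (n:ℝ)^(k+1) := by
      have h := (Nat.cast_le (α := ℝ)).2 (nat_sum_pow_upper k n)
      push_cast at h
      simp only [hg]
      linarith
    have h2 : (0:ℝ) ≤ ∑ m ∈ Finset.range n, g m :=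
      Finset.sum_nonneg fun m _ => by positivity
    have hk1 : (1:ℝ) ≤ (k:ℝ)+1 := by push_cast; linarith [Nat.cast_nonneg (α := ℝ) k]
    rw [Real.norm_eq_abs, Real.norm_eq_abs, abs_of_nonneg h2,
      abs_of_nonneg (by positivity : (0:ℝ) ≤ (n:ℝ)^(k+1))]
    nlinarith
  have hwlittle : (fun n : ℕ => ∑ m ∈ Finset.range n, w m) =o[atTop]
      (fun n : ℕ => ((n:ℝ))^(k+1)) := hsum.trans_isBigO hgO
  have hfirst : Tendsto (fun n : ℕ => (((n:ℝ))^(k+1))⁻¹ • ∑ m ∈ Finset.range n, w m)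
      atTop (nhds 0) := by
    have h5 := (Asymptotics.isBigO_refl (fun n : ℕ => ((((n:ℝ))^(k+1))⁻¹)) atTop).smul_isLittleO
      hwlittle
    rw [← Asymptotics.isLittleO_one_iff ℝ]
    refine h5.trans_isBigO ?_
    apply Asymptotics.IsBigO.of_bound 1
    filter_upwards [Filter.eventually_ge_atTop 1] with n hn
    have : ((n:ℝ))^(k+1) ≠ 0 := by positivity
    simp [mul_inv_cancel₀, inv_mul_cancel₀ this]
  have hsecond : Tendsto (fun n : ℕ => ((((n:ℝ))^(k+1))⁻¹ * ∑ m ∈ Finset.range n, g m) • l)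
      atTop (nhds (((k:ℝ)+1)⁻¹ • l)) := (tendsto_sum_pow_div k).smul_const l
  have htotal := hfirst.add hsecond
  rw [zero_add] at htotal
  refine htotal.congr fun n => ?_
  rw [← smul_smul]
  rw [← smul_add]
  congr 1
  rw [Finset.sum_smul, ← Finset.sum_add_distrib]
  refine Finset.sum_congr rfl fun m _ => ?_
  simp [hw, hg]

variable (P : X →L[ℂ] X)

lemma M_P_eq (hconv : ∀ x : X, Tendsto (fun n : ℕ => (M ^ n) x) atTop (nhds (P x)))
    (z : X) : M (P z) = P z := by
  have h1 : Tendsto (fun n : ℕ => M ((M ^ n) z)) atTop (nhds (M (P z))) :=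
    (M.continuous.tendsto _).comp (hconv z)
  have h2 : Tendsto (fun n : ℕ => M ((M ^ n) z)) atTop (nhds (P z)) := by
    have h3 : Tendsto (fun n : ℕ => (M ^ (n+1)) z) atTop (nhds (P z)) :=
      (hconv z).comp (tendsto_add_atTop_nat 1)
    refine h3.congr fun n => ?_
    rw [pow_succ']
    rfl
  exact tendsto_nhds_unique h1 h2

lemma Mpow_P_eq (hconv : ∀ x : X, Tendsto (fun n : ℕ => (M ^ n) x) atTop (nhds (P x)))
    (a : ℕ) (z : X) : (M ^ a) (P z) = P z := by
  induction a with
  | zero => rfl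
  | succ a ih =>
    rw [pow_succ']
    show M ((M ^ a) (P z)) = P z
    rw [ih, M_P_eq M P hconv]

lemma P_P_eq (hconv : ∀ x : X, Tendsto (fun n : ℕ => (M ^ n) x) atTop (nhds (P x)))
    (z : X) : P (P z) = P z := by
  have h1 : Tendsto (fun n : ℕ => (M ^ n) (P z)) atTop (nhds (P (P z))) := hconv (P z)
  have h2 : Tendsto (fun n : ℕ => (M ^ n) (P z)) atTop (nhds (P z)) := by
    refine tendsto_const_nhds.congr fun n => ?_
    rw [Mpow_P_eq M P hconv]
  exact tendsto_nhds_unique h1 h2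

lemma zenoT_zero (n : ℕ) : zenoT M L 0 n = M ^ n := by
  rw [zenoT]
  have hset : Finset.filter (fun i : Fin 0 → ℕ => ∑ l, i l ≤ n - 0)
      (Fintype.piFinset fun _ : Fin 0 => Finset.range (n + 1)) = {fun _ => 0} := by
    ext i
    simp only [Finset.mem_filter, Fintype.mem_piFinset, Finset.mem_singleton]
    constructor
    · intro _; exact funext fun l => l.elim0
    · rintro rfl; exact ⟨fun l => l.elim0, by simp⟩
  rw [hset, Finset.sum_singleton]
  show M ^ (n - 0 - ∑ l : Fin 0, 0) * zenoRest M L 0 _ = M ^ n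
  simp [zenoRest]

lemma sum_reflect_helper {E : Type*} [AddCommGroup E] (c : ℕ → E) (k n : ℕ) (hn : k + 1 ≤ n) :
    ∑ j ∈ Finset.range (n-k), c (n-1-j)
      = (∑ m ∈ Finset.range n, c m) - ∑ m ∈ Finset.range k, c m := by
  have e1 : ∑ j ∈ Finset.range (n-k), c (n-1-j)
      = ∑ j ∈ Finset.range (n-k), c ((n-k) - 1 - j + k) := by
    refine Finset.sum_congr rfl fun j hj => ?_
    simp only [Finset.mem_range] at hj
    congr 1
    omega
  have e2 := Finset.sum_range_reflect (fun j => c (j + k)) (n-k)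
  have e3 : ∑ j ∈ Finset.range (n-k), c (j + k) = ∑ m ∈ Finset.Ico k n, c m := by
    rw [Finset.sum_Ico_eq_sum_range]
    refine Finset.sum_congr rfl fun j _ => ?_
    congr 1
    omega
  have e4 := Finset.sum_range_add_sum_Ico c (by omega : k ≤ n)
  rw [e1, e2, e3, ← e4]
  abel

lemma main_aux (hM : ‖M‖ ≤ 1)
    (hconv : ∀ x : X, Tendsto (fun n : ℕ => (M ^ n) x) atTop (nhds (P x))) :
    ∀ (k : ℕ) (x : X),
      Tendsto (fun n : ℕ => (((n:ℝ))^k)⁻¹ • zenoT M L k n x) atTop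
        (nhds ((k.factorial : ℝ)⁻¹ • ((P * L * P) ^ k * P) x)) := by
  intro k
  induction k with
  | zero =>
    intro x
    simp only [zenoT_zero, pow_zero, inv_one, one_smul, Nat.factorial_zero, Nat.cast_one,
      one_mul]
    exact hconv x
  | succ k IH =>
    intro x
    set y := L (P x) with hy
    set l := ((k.factorial : ℝ)⁻¹ • ((P * L * P) ^ k * P) y) with hl
    have hIH : Tendsto (fun m : ℕ => (((m:ℝ))^k)⁻¹ • zenoT M L k m y) atTop (nhds l) := IH y
    have hces2 := cesaro_pow k hIH
    -- epsilon sequence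
    have hLc : Tendsto (fun j : ℕ => L ((M ^ j) x)) atTop (nhds y) :=
      (L.continuous.tendsto _).comp (hconv x)
    set ε : ℕ → ℝ := fun j => ‖L ((M ^ j) x) - y‖ with hε
    have hε0 : Tendsto ε atTop (nhds 0) := by
      have := (tendsto_sub_nhds_zero_iff.2 hLc).norm
      simpa only [norm_zero] using this
    have hces : Tendsto (fun n : ℕ => (n:ℝ)⁻¹ * ∑ j ∈ Finset.range n, ε j) atTop (nhds 0) :=
      hε0.cesaro
    -- the two pieces
    set A : ℕ → X := fun n => (((n:ℝ))^(k+1))⁻¹ •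
      ∑ j ∈ Finset.range (n-k), zenoT M L k (n-1-j) (L ((M ^ j) x) - y) with hA
    set B : ℕ → X := fun n => (((n:ℝ))^(k+1))⁻¹ •
      ∑ j ∈ Finset.range (n-k), zenoT M L k (n-1-j) y with hB
    have hsplit : ∀ n : ℕ, k + 1 ≤ n →
        (((n:ℝ))^(k+1))⁻¹ • zenoT M L (k+1) n x = A n + B n := by
      intro n hn
      rw [zenoT_succ M L k n hn]
      rw [hA, hB, ← smul_add, ← Finset.sum_add_distrib]
      rw [ContinuousLinearMap.sum_apply]
      congr 1
      refine Finset.sum_congr rfl fun j _ => ?_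
      rw [ContinuousLinearMap.mul_apply, ContinuousLinearMap.mul_apply, ← map_add]
      congr 1
      abel
    -- A tends to zero
    have hAzero : Tendsto A atTop (nhds 0) := by
      apply squeeze_zero_norm' (a := fun n : ℕ => ‖L‖^k * ((n:ℝ)⁻¹ * ∑ j ∈ Finset.range n, ε j))
      · filter_upwards [Filter.eventually_ge_atTop (k+1)] with n hn
        have hn1 : (1:ℕ) ≤ n := by omega
        have hn0 : (0:ℝ) < n := by exact_mod_cast hn1
        have hnorm1 : ‖∑ j ∈ Finset.range (n-k), zenoT M L k (n-1-j) (L ((M ^ j) x) - y)‖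
            ≤ (n:ℝ)^k * ‖L‖^k * ∑ j ∈ Finset.range n, ε j := by
          refine le_trans (norm_sum_le _ _) ?_
          have hstep : ∀ j ∈ Finset.range (n-k),
              ‖zenoT M L k (n-1-j) (L ((M ^ j) x) - y)‖ ≤ (n:ℝ)^k * ‖L‖^k * ε j := by
            intro j hj
            simp only [Finset.mem_range] at hj
            refine le_trans (ContinuousLinearMap.le_opNorm _ _) ?_
            simp only [hε]
            have h1 : ‖zenoT M L k (n-1-j)‖ ≤ ((n-1-j:ℕ)+1:ℝ)^k * ‖L‖^k := by
              have := zenoT_norm_le M L hM k (n-1-j)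
              calc ‖zenoT M L k (n-1-j)‖ ≤ ((n-1-j)+1:ℕ)^k * ‖L‖^k := by exact_mod_cast this
                _ = ((n-1-j:ℕ)+1:ℝ)^k * ‖L‖^k := by push_cast; ring
            have h2 : ((n-1-j:ℕ)+1:ℝ)^k ≤ (n:ℝ)^k := by
              apply pow_le_pow_left₀ (by positivity)
              have : (n-1-j) + 1 ≤ n := by omega
              exact_mod_cast this
            have h4 : ‖zenoT M L k (n-1-j)‖ ≤ (n:ℝ)^k * ‖L‖^k :=
              h1.trans (mul_le_mul_of_nonneg_right h2 (pow_nonneg (norm_nonneg L) k))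
            exact mul_le_mul_of_nonneg_right h4 (norm_nonneg _)
          refine le_trans (Finset.sum_le_sum hstep) ?_
          rw [← Finset.mul_sum]
          apply mul_le_mul_of_nonneg_left
          · apply Finset.sum_le_sum_of_subset_of_nonneg
            · exact Finset.range_subset_range.2 (by omega)
            · intro j _ _; exact norm_nonneg _
          · positivity
        rw [hA, norm_smul, norm_inv, norm_pow]
        simp only [Real.norm_natCast]
        calc ((n:ℝ)^(k+1))⁻¹ * ‖∑ j ∈ Finset.range (n-k), zenoT M L k (n-1-j)
              (L ((M ^ j) x) - y)‖
            ≤ ((n:ℝ)^(k+1))⁻¹ * ((n:ℝ)^k * ‖L‖^k * ∑ j ∈ Finset.range n, ε j) := by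
              apply mul_le_mul_of_nonneg_left hnorm1 (by positivity)
          _ = ‖L‖^k * ((n:ℝ)⁻¹ * ∑ j ∈ Finset.range n, ε j) := by
              field_simp
              ring
      · have := hces.const_mul (‖L‖^k)
        simpa using this
    -- B tends to the limit
    have hBlim : Tendsto B atTop (nhds (((k:ℝ)+1)⁻¹ • l)) := by
      have hzero2 : Tendsto (fun n : ℕ => (((n:ℝ))^(k+1))⁻¹ •
          ∑ m ∈ Finset.range k, zenoT M L k m y) atTop (nhds 0) := by
        apply squeeze_zero_norm
          (a := fun n : ℕ => (((n:ℝ))^(k+1))⁻¹ * ‖∑ m ∈ Finset.range k, zenoT M L k m y‖)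
        · intro n
          rw [norm_smul, norm_inv, norm_pow, Real.norm_natCast]
        · have h2 : Tendsto (fun n : ℕ => (((n:ℝ))^(k+1))⁻¹) atTop (nhds 0) := by
            apply Filter.Tendsto.inv_tendsto_atTop
            exact (tendsto_pow_atTop (by omega)).comp tendsto_natCast_atTop_atTop
          simpa using h2.mul_const (‖∑ m ∈ Finset.range k, zenoT M L k m y‖)
      have hmain := hces2.sub hzero2
      rw [sub_zero] at hmain
      refine hmain.congr' ?_
      filter_upwards [Filter.eventually_ge_atTop (k+1)] with n hn
      have hr := sum_reflect_helper (fun m => zenoT M L k m y) k n hn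
      simp only [hB]
      rw [hr, smul_sub]
    -- combine
    have htot := hAzero.add hBlim
    rw [zero_add] at htot
    have hfinal : ((k:ℝ)+1)⁻¹ • l
        = ((k+1).factorial : ℝ)⁻¹ • ((P * L * P) ^ (k+1) * P) x := by
      rw [hl, smul_smul]
      have hsc : ((k:ℝ)+1)⁻¹ * (k.factorial : ℝ)⁻¹ = ((k+1).factorial : ℝ)⁻¹ := by
        rw [Nat.factorial_succ]
        push_cast
        rw [mul_inv]
      rw [hsc]
      congr 1
      have h1 : ((P * L * P) ^ (k+1) * P) x = ((P * L * P) ^ k) ((P * L * P) (P x)) := by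
        rw [pow_succ]
        rfl
      rw [h1]
      have h2 : (P * L * P) (P x) = P (L (P (P x))) := rfl
      rw [h2, P_P_eq M P hconv x]
      rfl
    rw [← hfinal]
    refine htot.congr' ?_
    filter_upwards [Filter.eventually_ge_atTop (k+1)] with n hn
    exact (hsplit n hn).symm

end ZenoAux

/-- Key lemma behind the strong quantum Zeno limit (constant family case): if `M` is a
contraction with `M^n x → P x` for all `x`, and `L` is bounded, then for every `k ≥ 1` and
every `x`, `(1/n^k) ∑_{i ∈ Δ_disc^k(n)} M^{i_{k+1}} L M^{i_k} ⋯ L M^{i_1} x → ((PLP)^k/k!) x`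
as `n → ∞`, where `i_{k+1} = n − k − ∑_{l=1}^k i_l`. -/
theorem zeno_simplex_sum_tendsto (M P L : X →L[ℂ] X) (hM : ‖M‖ ≤ 1)
    (hconv : ∀ x : X, Tendsto (fun n : ℕ => (M ^ n) x) atTop (nhds (P x)))
    (k : ℕ) (hk : 1 ≤ k) (x : X) :
    Tendsto (fun n : ℕ =>
        (((n : ℂ)) ^ k)⁻¹ •
          ∑ i ∈ Finset.filter (fun i : Fin k → ℕ => ∑ l, i l ≤ n - k)
              (Fintype.piFinset fun _ : Fin k => Finset.range (n + 1)),
            (M ^ (n - k - ∑ l, i l) * zenoRest M L k i) x)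
      atTop (nhds (((Nat.factorial k : ℂ))⁻¹ • ((P * L * P) ^ k) x)) := by
  have hmain := ZenoAux.main_aux M L P hM hconv k x
  have hseq : ∀ n : ℕ,
      (((n:ℝ))^k)⁻¹ • ZenoAux.zenoT M L k n x
        = (((n : ℂ)) ^ k)⁻¹ •
            ∑ i ∈ Finset.filter (fun i : Fin k → ℕ => ∑ l, i l ≤ n - k)
              (Fintype.piFinset fun _ : Fin k => Finset.range (n + 1)),
            (M ^ (n - k - ∑ l, i l) * zenoRest M L k i) x := by
    intro n
    rw [← Complex.coe_smul]
    congr 1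
    · push_cast
      rfl
    · rw [ZenoAux.zenoT, ContinuousLinearMap.sum_apply]
  have hlim : ((Nat.factorial k : ℝ))⁻¹ • ((P * L * P) ^ k * P) x
      = ((Nat.factorial k : ℂ))⁻¹ • ((P * L * P) ^ k) x := by
    rw [← Complex.coe_smul]
    congr 1
    · push_cast
      rfl
    · cases k with
      | zero => omega
      | succ s =>
        have e : ((P*L*P)^(s+1) * P) x = ((P*L*P)^s) ((P*L*P) (P x)) := by
          rw [pow_succ]
          rfl
        have e2 : (P*L*P) (P x) = P (L (P (P x))) := rfl
        have e3 : ((P*L*P)^(s+1)) x = ((P*L*P)^s) (P (L (P x))) := by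
          rw [pow_succ]
          rfl
        rw [e, e2, ZenoAux.P_P_eq M P hconv x, e3]
  have h := hmain.congr hseq
  rwa [hlim] at h
end
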